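/- arXiv:2410.14592 — 5 statements merged into one kernel-verified Lean document; each statement's English description precedes it below -/
import Mathlib

section
/- Let F : ℝ^n ⇉ ℝ^n be maximally monotone and (1/L)-inverse Lipschitz. Then its resolvent J_F = (Id + F)^{-1} is single-valued, everywhere defined, and Lipschitz continuous with constant L/√(L²+1) < 1 (hence a contraction). -/
noncomputable section

abbrev Evec (n : ℕ) := EuclideanSpace ℝ (Fin n)

section KirszbraunAux

open Finset Metric

variable {E : Type*} [NormedAddCommGroup E] [InnerProductSpace ℝ E] [FiniteDimensional ℝ E]

lemma sum_identity {ι : Type*} (B : Finset ι) (w : ι → ℝ) (c : ι → E)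
    (hw1 : ∑ v ∈ B, w v = 1) :
    ∑ v ∈ B, ∑ v' ∈ B, w v * w v' * ‖c v - c v'‖ ^ 2
      = 2 * (∑ v ∈ B, w v * ‖c v‖ ^ 2) - 2 * ‖∑ v ∈ B, w v • c v‖ ^ 2 := by
  have hin : ∀ x y : E, ‖x - y‖ ^ 2 = ‖x‖ ^ 2 - 2 * inner ℝ x y + ‖y‖ ^ 2 := fun x y => by
    rw [norm_sub_sq_real]
  have h2 : (‖∑ v ∈ B, w v • c v‖ : ℝ) ^ 2
      = ∑ v ∈ B, ∑ v' ∈ B, w v * w v' * inner ℝ (c v) (c v') := by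
    rw [← real_inner_self_eq_norm_sq, sum_inner]
    refine Finset.sum_congr rfl fun v hv => ?_
    rw [real_inner_smul_left, inner_sum, Finset.mul_sum]
    refine Finset.sum_congr rfl fun v' hv' => ?_
    rw [real_inner_smul_right]; ring
  have key : ∀ g : ι → ℝ, ∑ x ∈ B, ∑ y ∈ B, w x * w y * g x = ∑ x ∈ B, w x * g x := by
    intro g
    refine Finset.sum_congr rfl fun x hx => ?_
    calc ∑ y ∈ B, w x * w y * g x = (w x * g x) * ∑ y ∈ B, w y := by
          rw [Finset.mul_sum]; exact Finset.sum_congr rfl fun y _ => by ring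
      _ = w x * g x := by rw [hw1, mul_one]
  have e2 : ∑ x ∈ B, ∑ y ∈ B, w x * w y * ‖c y‖ ^ 2 = ∑ y ∈ B, w y * ‖c y‖ ^ 2 := by
    rw [Finset.sum_comm]
    rw [← key fun y => ‖c y‖ ^ 2]
    exact Finset.sum_congr rfl fun y _ => Finset.sum_congr rfl fun x _ => by ring
  calc ∑ v ∈ B, ∑ v' ∈ B, w v * w v' * ‖c v - c v'‖ ^ 2
      = ∑ v ∈ B, ∑ v' ∈ B, (w v * w v' * ‖c v‖ ^ 2 + w v * w v' * ‖c v'‖ ^ 2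
          - 2 * (w v * w v' * inner ℝ (c v) (c v'))) := by
        refine Finset.sum_congr rfl fun v hv => Finset.sum_congr rfl fun v' hv' => ?_
        rw [hin]; ring
    _ = 2 * (∑ v ∈ B, w v * ‖c v‖ ^ 2) - 2 * ‖∑ v ∈ B, w v • c v‖ ^ 2 := by
        simp only [Finset.sum_sub_distrib, Finset.sum_add_distrib, ← Finset.mul_sum]
        rw [key fun v => ‖c v‖ ^ 2, e2, h2]
        ring

set_option maxHeartbeats 1000000 in
lemma finite_kirszbraun {ι : Type*} (s : Finset ι) (hs : s.Nonempty)
    (N Y : ι → E) (y : E)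
    (hlip : ∀ i ∈ s, ∀ j ∈ s, ‖N i - N j‖ ≤ ‖Y i - Y j‖) :
    ∃ w : E, ∀ i ∈ s, ‖w - N i‖ ≤ ‖y - Y i‖ := by
  classical
  by_cases hz : ∃ i ∈ s, y = Y i
  · obtain ⟨i, hi, hyi⟩ := hz
    exact ⟨N i, fun j hj => by
      rw [hyi]; exact hlip i hi j hj⟩
  push_neg at hz
  set r : ι → ℝ := fun i => ‖y - Y i‖ with hr
  have hrpos : ∀ i ∈ s, 0 < r i := fun i hi =>
    norm_sub_pos_iff.mpr (hz i hi)
  set f : E → ℝ := fun z => s.sup' hs fun i => ‖z - N i‖ / r i with hf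
  have hfc : Continuous f := by
    rw [continuous_iff_continuousAt]
    intro x
    exact ContinuousAt.finset_sup'_apply hs fun i hi =>
      (((continuous_id.sub continuous_const).norm).div_const _).continuousAt
  obtain ⟨i0, hi0⟩ := id hs
  have hterm : ∀ (z : E), ∀ i ∈ s, ‖z - N i‖ / r i ≤ f z := fun z i hi =>
    Finset.le_sup' (fun i => ‖z - N i‖ / r i) hi
  have hfnonneg : ∀ z, 0 ≤ f z := fun z =>
    le_trans (div_nonneg (norm_nonneg _) (norm_nonneg _)) (hterm z i0 hi0)
  set c0 : ℝ := f (N i0) with hc0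
  set K := closedBall (N i0) (c0 * r i0) with hK
  have hKne : (N i0 : E) ∈ K := by
    rw [hK, Metric.mem_closedBall, dist_self]; exact mul_nonneg (hfnonneg _) (hrpos i0 hi0).le
  obtain ⟨z₀, hz₀K, hz₀min⟩ :=
    (isCompact_closedBall (N i0) (c0 * r i0)).exists_isMinOn ⟨_, hKne⟩ hfc.continuousOn
  have hglobal : ∀ z, f z₀ ≤ f z := by
    intro z
    by_cases hzK : z ∈ K
    · exact hz₀min hzK
    · have h1 : c0 * r i0 < ‖z - N i0‖ := by
        simpa [hK, dist_eq_norm] using hzK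
      have h2 : c0 < ‖z - N i0‖ / r i0 :=
        (lt_div_iff₀ (hrpos i0 hi0)).mpr (by linarith [h1])
      exact le_trans (hz₀min hKne) (le_trans h2.le (hterm z i0 hi0))
  set lam : ℝ := f z₀ with hlam
  by_cases hl : lam ≤ 1
  · refine ⟨z₀, fun i hi => ?_⟩
    have h1 : ‖z₀ - N i‖ / r i ≤ lam := hterm z₀ i hi
    have := (div_le_one (hrpos i hi)).mp (le_trans h1 hl)
    exact this
  push_neg at hl
  exfalso
  have hub : ∀ i ∈ s, ‖z₀ - N i‖ ≤ lam * r i := fun i hi =>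
    (div_le_iff₀ (hrpos i hi)).mp (hterm z₀ i hi)
  set A := s.filter (fun i => ‖z₀ - N i‖ = lam * r i) with hA
  have hAs : A ⊆ s := Finset.filter_subset _ _
  have hAne : A.Nonempty := by
    obtain ⟨i, hi, hieq⟩ := Finset.exists_mem_eq_sup' hs (fun i => ‖z₀ - N i‖ / r i)
    exact ⟨i, Finset.mem_filter.mpr ⟨hi,
      by rw [hlam]; simp only [hf]; rw [hieq]; exact (div_mul_cancel₀ _ (hrpos i hi).ne').symm⟩⟩
  set B := A.image N with hB
  set C := convexHull ℝ (↑B : Set E) with hC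
  have hBfin : (↑B : Set E).Finite := B.finite_toSet
  have hCconv : Convex ℝ C := convex_convexHull ℝ _
  have hCcompact : IsCompact C := hBfin.isCompact_convexHull ℝ
  have hCne : C.Nonempty := by
    obtain ⟨i, hi⟩ := hAne
    exact ⟨N i, subset_convexHull ℝ _ (Finset.mem_coe.mpr (Finset.mem_image_of_mem N hi))⟩
  -- step 1 : z₀ ∈ C
  have hzC : z₀ ∈ C := by
    by_contra hzC
    obtain ⟨p, hpC, hpmin⟩ :=
      exists_norm_eq_iInf_of_complete_convex hCne hCcompact.isClosed.isComplete hCconv z₀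
    have hproj : ∀ x ∈ C, (inner ℝ (z₀ - p) (x - p) : ℝ) ≤ 0 :=
      (norm_eq_iInf_iff_real_inner_le_zero hCconv hpC).mp hpmin
    set v := p - z₀ with hv
    have hvne : v ≠ 0 := sub_ne_zero.mpr (fun h => hzC (h ▸ hpC))
    have hvpos : (0:ℝ) < ‖v‖ := norm_pos_iff.mpr hvne
    have hactive : ∀ i ∈ A, (inner ℝ v (z₀ - N i) : ℝ) ≤ -‖v‖ ^ 2 := by
      intro i hi
      have hNiC : N i ∈ C :=
        subset_convexHull ℝ _ (Finset.mem_coe.mpr (Finset.mem_image_of_mem N hi))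
      have h1 : (inner ℝ (z₀ - p) (N i - p) : ℝ) ≤ 0 := hproj _ hNiC
      have : (inner ℝ v (z₀ - N i) : ℝ)
          = -‖v‖ ^ 2 + (inner ℝ (z₀ - p) (N i - p) : ℝ) := by
        rw [show z₀ - N i = (z₀ - p) - (N i - p) from by abel, inner_sub_right,
          show z₀ - p = -(p - z₀) from by abel, inner_neg_right, inner_neg_left,
          real_inner_self_eq_norm_sq]
        ring
      linarith [this, h1]
    -- perturbation step
    set t : ℝ :=
      (if hne' : (s \ A).Nonempty then
        min 1 ((s \ A).inf' hne' fun i => (lam * r i - ‖z₀ - N i‖) / (2 * ‖v‖))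
      else 1) with hts
    have hinact : ∀ i ∈ s \ A, ‖z₀ - N i‖ < lam * r i := by
      intro i hi
      obtain ⟨his, hiA⟩ := Finset.mem_sdiff.mp hi
      refine lt_of_le_of_ne (hub i his) fun h => hiA ?_
      exact Finset.mem_filter.mpr ⟨his, h⟩
    have ht0 : 0 < t := by
      rw [hts]
      split_ifs with hne'
      · refine lt_min one_pos ?_
        rw [Finset.lt_inf'_iff]
        intro i hi
        exact div_pos (by linarith [hinact i hi]) (by positivity)
      · exact one_pos
    have ht1 : t ≤ 1 := by
      rw [hts]; split_ifs with hne'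
      · exact min_le_left _ _
      · exact le_refl 1
    have htin : ∀ i ∈ s \ A, t * ‖v‖ ≤ (lam * r i - ‖z₀ - N i‖) / 2 := by
      intro i hi
      have hne' : (s \ A).Nonempty := ⟨i, hi⟩
      have h1 : t ≤ (lam * r i - ‖z₀ - N i‖) / (2 * ‖v‖) := by
        rw [hts]
        simp only [dif_pos hne']
        exact le_trans (min_le_right _ _) (Finset.inf'_le _ hi)
      calc t * ‖v‖ ≤ ((lam * r i - ‖z₀ - N i‖) / (2 * ‖v‖)) * ‖v‖ :=
            mul_le_mul_of_nonneg_right h1 (norm_nonneg v)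
        _ = (lam * r i - ‖z₀ - N i‖) / 2 := by
            field_simp
    have hkey : ∀ i ∈ s, ‖z₀ + t • v - N i‖ / r i < lam := by
      intro i hi
      rw [div_lt_iff₀ (hrpos i hi)]
      by_cases hiA : i ∈ A
      · have hsq : ‖z₀ + t • v - N i‖ ^ 2 < (lam * r i) ^ 2 := by
          have hexp : ‖z₀ + t • v - N i‖ ^ 2
              = ‖z₀ - N i‖ ^ 2 + 2 * (t * inner ℝ v (z₀ - N i)) + t ^ 2 * ‖v‖ ^ 2 := by
            rw [show z₀ + t • v - N i = (z₀ - N i) + t • v from by abel,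
              norm_add_sq_real, real_inner_smul_right, norm_smul, real_inner_comm]
            simp [mul_pow, abs_of_pos ht0]
          have h2 : ‖z₀ - N i‖ = lam * r i := (Finset.mem_filter.mp hiA).2
          have h3 := hactive i hiA
          have h4 : t * inner ℝ v (z₀ - N i) ≤ t * (-‖v‖ ^ 2) :=
            mul_le_mul_of_nonneg_left h3 ht0.le
          have h5 : t ^ 2 * ‖v‖ ^ 2 ≤ t * ‖v‖ ^ 2 := by
            nlinarith [mul_nonneg (mul_nonneg ht0.le (by linarith : (0:ℝ) ≤ 1 - t)) (sq_nonneg ‖v‖)]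
          have h6 : 0 < t * ‖v‖ ^ 2 := by positivity
          rw [hexp, h2]
          nlinarith
        have := lt_of_pow_lt_pow_left₀ 2
          (mul_nonneg (by linarith : (0:ℝ) ≤ lam) (hrpos i hi).le) hsq
        exact this
      · have hi' : i ∈ s \ A := Finset.mem_sdiff.mpr ⟨hi, hiA⟩
        calc ‖z₀ + t • v - N i‖ ≤ ‖z₀ - N i‖ + t * ‖v‖ := by
              rw [show z₀ + t • v - N i = (z₀ - N i) + t • v from by abel]
              refine le_trans (norm_add_le _ _) ?_
              rw [norm_smul, Real.norm_eq_abs, abs_of_pos ht0]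
          _ ≤ ‖z₀ - N i‖ + (lam * r i - ‖z₀ - N i‖) / 2 := by
              linarith [htin i hi']
          _ < lam * r i := by linarith [hinact i hi']
    have hflt : f (z₀ + t • v) < lam := by
      rw [hf]
      exact (Finset.sup'_lt_iff hs).mpr hkey
    exact absurd (hglobal (z₀ + t • v)) (not_le.mpr hflt)
  -- final computation
  rw [hC, Finset.convexHull_eq] at hzC
  obtain ⟨w, hw0, hw1, hwc⟩ := hzC
  rw [Finset.centerMass_eq_of_sum_1 _ _ hw1] at hwc
  simp only [id] at hwc
  set g : E → ι := fun x => if h : ∃ i ∈ A, N i = x then h.choose else i0 with hg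
  have hgspec : ∀ x ∈ B, g x ∈ A ∧ N (g x) = x := by
    intro x hx
    have h : ∃ i ∈ A, N i = x := Finset.mem_image.mp hx
    rw [hg]
    simp only [dif_pos h]
    exact ⟨h.choose_spec.1, h.choose_spec.2⟩
  set a : E → E := fun x => x - z₀ with ha
  set b : E → E := fun x => Y (g x) - y with hb
  set ρ : E → ℝ := fun x => r (g x) with hρ
  have hax : ∀ x ∈ B, ‖a x‖ = lam * ρ x := by
    intro x hx
    obtain ⟨hgA, hgN⟩ := hgspec x hx
    have h2 := (Finset.mem_filter.mp hgA).2
    show ‖x - z₀‖ = lam * r (g x)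
    rw [norm_sub_rev]
    conv_lhs => rw [← hgN]
    exact h2
  have hbx : ∀ x ∈ B, ‖b x‖ = ρ x := fun x hx => (norm_sub_rev _ _).trans rfl
  have hρpos : ∀ x ∈ B, 0 < ρ x := fun x hx => hrpos _ (hAs (hgspec x hx).1)
  have hsum0 : ∑ x ∈ B, w x • a x = 0 := by
    rw [ha]
    simp only [smul_sub]
    rw [Finset.sum_sub_distrib, hwc, ← Finset.sum_smul, hw1, one_smul, sub_self]
  have hab : ∀ x ∈ B, ∀ x' ∈ B, ‖a x - a x'‖ ≤ ‖b x - b x'‖ := by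
    intro x hx x' hx'
    obtain ⟨hgA, hgN⟩ := hgspec x hx
    obtain ⟨hgA', hgN'⟩ := hgspec x' hx'
    have h1 : a x - a x' = N (g x) - N (g x') := by rw [ha]; simp only; rw [hgN, hgN']; abel
    have h2 : b x - b x' = Y (g x) - Y (g x') := by rw [hb]; simp only; abel
    rw [h1, h2]
    exact hlip _ (hAs hgA) _ (hAs hgA')
  have Ia := sum_identity B w a hw1
  have Ib := sum_identity B w b hw1
  have hterm_le : ∑ x ∈ B, ∑ x' ∈ B, w x * w x' * ‖a x - a x'‖ ^ 2
      ≤ ∑ x ∈ B, ∑ x' ∈ B, w x * w x' * ‖b x - b x'‖ ^ 2 := by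
    refine Finset.sum_le_sum fun x hx => Finset.sum_le_sum fun x' hx' => ?_
    refine mul_le_mul_of_nonneg_left ?_ (mul_nonneg (hw0 x hx) (hw0 x' hx'))
    exact pow_le_pow_left₀ (norm_nonneg _) (hab x hx x' hx') 2
  set S : ℝ := ∑ x ∈ B, w x * ρ x ^ 2 with hS
  have hSa : ∑ x ∈ B, w x * ‖a x‖ ^ 2 = lam ^ 2 * S := by
    rw [hS, Finset.mul_sum]
    refine Finset.sum_congr rfl fun x hx => ?_
    rw [hax x hx]; ring
  have hSb : ∑ x ∈ B, w x * ‖b x‖ ^ 2 = S := by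
    refine Finset.sum_congr rfl fun x hx => ?_
    rw [hbx x hx]
  have hnormb : (0:ℝ) ≤ ‖∑ x ∈ B, w x • b x‖ ^ 2 := sq_nonneg _
  have hkey2 : 2 * (lam ^ 2 * S) ≤ 2 * S := by
    rw [hsum0] at Ia
    simp only [norm_zero] at Ia
    rw [hSa] at Ia
    rw [hSb] at Ib
    nlinarith [hterm_le]
  have hSpos : 0 < S := by
    have h01 : (∑ x ∈ B, (0:ℝ)) < ∑ x ∈ B, w x := by
      rw [Finset.sum_const_zero, hw1]; exact one_pos
    obtain ⟨x, hx, hwx⟩ := Finset.exists_lt_of_sum_lt h01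
    have h2 : 0 < w x * ρ x ^ 2 := mul_pos hwx (pow_pos (hρpos x hx) 2)
    have h3 : w x * ρ x ^ 2 ≤ S :=
      Finset.single_le_sum (fun i hi => mul_nonneg (hw0 i hi) (sq_nonneg _)) hx
    linarith
  nlinarith [mul_pos (show (0:ℝ) < lam ^ 2 - 1 by nlinarith) hSpos]

lemma onepoint_kirszbraun {ι : Type*} [Nonempty ι] (N Y : ι → E) (y : E)
    (hlip : ∀ i j, ‖N i - N j‖ ≤ ‖Y i - Y j‖) :
    ∃ w : E, ∀ i, ‖w - N i‖ ≤ ‖y - Y i‖ := by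
  classical
  obtain ⟨i0⟩ := ‹Nonempty ι›
  set t : ι → Set E := fun i => closedBall (N i) ‖y - Y i‖ with ht
  have htmem : ∀ (w : E) i, w ∈ t i ↔ ‖w - N i‖ ≤ ‖y - Y i‖ := by
    intro w i
    rw [ht]
    simp [Metric.mem_closedBall, dist_eq_norm]
  suffices h : (t i0 ∩ ⋂ i, t i).Nonempty by
    obtain ⟨w, hw⟩ := h
    exact ⟨w, fun i => (htmem w i).mp (Set.mem_iInter.mp hw.2 i)⟩
  by_contra hemp
  rw [Set.not_nonempty_iff_eq_empty] at hemp
  obtain ⟨u, hu⟩ := (isCompact_closedBall (N i0) ‖y - Y i0‖).elim_finite_subfamily_closed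
    t (fun i => Metric.isClosed_closedBall) hemp
  obtain ⟨w, hw⟩ := finite_kirszbraun (insert i0 u) ⟨i0, Finset.mem_insert_self i0 u⟩
    N Y y (fun i _ j _ => hlip i j)
  have hwK : w ∈ closedBall (N i0) ‖y - Y i0‖ :=
    (htmem w i0).mpr (hw i0 (Finset.mem_insert_self i0 u))
  have hwt : w ∈ ⋂ i ∈ u, t i := by
    refine Set.mem_iInter₂.mpr fun i hi => (htmem w i).mpr ?_
    exact hw i (Finset.mem_insert_of_mem hi)
  rw [Set.eq_empty_iff_forall_notMem] at hu
  exact hu w ⟨hwK, hwt⟩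


end KirszbraunAux

/-- If `F` is maximally monotone and `(1/L)`-inverse Lipschitz, then its resolvent
`J_F = (Id + F)⁻¹` is single-valued, everywhere defined, and `L/√(L²+1)`-Lipschitz,
hence a contraction. -/
theorem resolvent_contractive_of_inverseLipschitz
    (n : ℕ) (L : ℝ) (hL : 0 < L) (F : Evec n → Set (Evec n))
    (hmono : ∀ ω ω' u u', u ∈ F ω → u' ∈ F ω' →
      (0 : ℝ) ≤ (inner ℝ (u - u') (ω - ω') : ℝ))
    (hmax : ∀ ω u, (∀ ω' u', u' ∈ F ω' →
      (0 : ℝ) ≤ (inner ℝ (u - u') (ω - ω') : ℝ)) → u ∈ F ω)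
    (hinv : ∀ ω ω' u u', u ∈ F ω → u' ∈ F ω' →
      (1 / L) * ‖ω - ω'‖ ≤ ‖u - u'‖) :
    ∃ J : Evec n → Evec n,
      (∀ ω v, ω - v ∈ F v ↔ v = J ω) ∧
      (∀ ω ω', ‖J ω - J ω'‖ ≤ (L / Real.sqrt (L ^ 2 + 1)) * ‖ω - ω'‖) ∧
      L / Real.sqrt (L ^ 2 + 1) < 1 := by
  classical
  -- the graph is nonempty
  have hne : ∃ p : Evec n × Evec n, p.2 ∈ F p.1 := by
    by_contra h
    push_neg at h
    exact h (0, 0) (hmax 0 0 fun ω' u' hu' => absurd hu' (h (ω', u')))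
  -- existence of resolvent value
  have hexists : ∀ y : Evec n, ∃ x, y - x ∈ F x := by
    intro y
    set ι := {p : Evec n × Evec n // p.2 ∈ F p.1} with hι
    have : Nonempty ι := ⟨⟨hne.choose, hne.choose_spec⟩⟩
    set N : ι → Evec n := fun i => i.1.1 - i.1.2 with hN
    set Y : ι → Evec n := fun i => i.1.1 + i.1.2 with hY
    have hlip : ∀ i j : ι, ‖N i - N j‖ ≤ ‖Y i - Y j‖ := by
      intro i j
      set a := i.1.1 - j.1.1 with ha
      set b := i.1.2 - j.1.2 with hb
      have hmon : (0:ℝ) ≤ inner ℝ b a := hmono _ _ _ _ i.2 j.2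
      have h1 : N i - N j = a - b := by rw [hN, ha, hb]; simp only; abel
      have h2 : Y i - Y j = a + b := by rw [hY, ha, hb]; simp only; abel
      rw [h1, h2]
      have hsq : ‖a - b‖ ^ 2 ≤ ‖a + b‖ ^ 2 := by
        rw [norm_sub_sq_real, norm_add_sq_real]
        have : (inner ℝ a b : ℝ) = inner ℝ b a := (real_inner_comm a b).symm
        linarith
      calc ‖a - b‖ = Real.sqrt (‖a - b‖ ^ 2) := (Real.sqrt_sq (norm_nonneg _)).symm
        _ ≤ Real.sqrt (‖a + b‖ ^ 2) := Real.sqrt_le_sqrt hsq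
        _ = ‖a + b‖ := Real.sqrt_sq (norm_nonneg _)
    obtain ⟨w, hw⟩ := onepoint_kirszbraun N Y y hlip
    refine ⟨(1/2 : ℝ) • (y + w), hmax _ _ fun ω' u' hu' => ?_⟩
    set i : ι := ⟨(ω', u'), hu'⟩ with hidef
    have hNi : N i = ω' - u' := rfl
    have hYi : Y i = ω' + u' := rfl
    have hwi : ‖w - (ω' - u')‖ ≤ ‖y - (ω' + u')‖ := by
      have := hw i
      rwa [hNi, hYi] at this
    have e1 : y - (1/2 : ℝ) • (y + w) - u'
        = (1/2 : ℝ) • ((y - (ω' + u')) - (w - (ω' - u'))) := by module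
    have e2 : (1/2 : ℝ) • (y + w) - ω'
        = (1/2 : ℝ) • ((y - (ω' + u')) + (w - (ω' - u'))) := by module
    set p := y - (ω' + u') with hp
    set q := w - (ω' - u') with hq
    have hinner : (inner ℝ (p - q) (p + q) : ℝ) = ‖p‖ ^ 2 - ‖q‖ ^ 2 := by
      rw [inner_sub_left, inner_add_right, inner_add_right,
        real_inner_self_eq_norm_sq, real_inner_self_eq_norm_sq, real_inner_comm q p]
      ring
    rw [e1, e2, real_inner_smul_left, real_inner_smul_right, hinner]
    have h1 : ‖q‖ ≤ ‖p‖ := hwi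
    nlinarith [norm_nonneg p, norm_nonneg q]
  -- uniqueness
  have huniq : ∀ y x x' : Evec n, y - x ∈ F x → y - x' ∈ F x' → x = x' := by
    intro y x x' hx hx'
    have h := hmono x x' (y - x) (y - x') hx hx'
    have e : (y - x) - (y - x') = -(x - x') := by abel
    rw [e, inner_neg_left, real_inner_self_eq_norm_sq] at h
    have : ‖x - x'‖ = 0 := by nlinarith [norm_nonneg (x - x')]
    exact sub_eq_zero.mp (norm_eq_zero.mp this)
  set J : Evec n → Evec n := fun y => (hexists y).choose with hJdef
  have hJ : ∀ y, y - J y ∈ F (J y) := fun y => (hexists y).choose_spec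
  -- the contraction constant
  have hsq : Real.sqrt (L ^ 2 + 1) ^ 2 = L ^ 2 + 1 := Real.sq_sqrt (by positivity)
  have hsqpos : 0 < Real.sqrt (L ^ 2 + 1) := Real.sqrt_pos.mpr (by positivity)
  set c : ℝ := L / Real.sqrt (L ^ 2 + 1) with hc
  have hcpos : 0 < c := div_pos hL hsqpos
  refine ⟨J, fun ω v => ⟨fun h => huniq ω v (J ω) h (hJ ω), fun h => h ▸ hJ ω⟩, ?_, ?_⟩
  · -- Lipschitz estimate
    intro ω ω'
    set x := J ω with hx
    set x' := J ω' with hx'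
    have hu : ω - x ∈ F x := hJ ω
    have hu' : ω' - x' ∈ F x' := hJ ω'
    have hm : (0:ℝ) ≤ inner ℝ ((ω - x) - (ω' - x')) (x - x') := hmono _ _ _ _ hu hu'
    have hinvx : (1 / L) * ‖x - x'‖ ≤ ‖(ω - x) - (ω' - x')‖ := hinv _ _ _ _ hu hu'
    set d := x - x' with hd
    set e := (ω - x) - (ω' - x') with he
    have hsum : ω - ω' = d + e := by rw [hd, he]; abel
    have hnorm : ‖ω - ω'‖ ^ 2 = ‖d‖ ^ 2 + 2 * inner ℝ d e + ‖e‖ ^ 2 := by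
      rw [hsum, norm_add_sq_real]
    have hde : (0:ℝ) ≤ inner ℝ d e := by
      rw [real_inner_comm]; exact hm
    have hinvsq : (1 / L) ^ 2 * ‖d‖ ^ 2 ≤ ‖e‖ ^ 2 := by
      have h2 : ((1 / L) * ‖d‖) ^ 2 ≤ ‖e‖ ^ 2 := by
        refine pow_le_pow_left₀ ?_ hinvx 2
        positivity
      calc (1 / L) ^ 2 * ‖d‖ ^ 2 = ((1 / L) * ‖d‖) ^ 2 := by ring
        _ ≤ ‖e‖ ^ 2 := h2
    have hkey : ‖d‖ ^ 2 ≤ c ^ 2 * ‖ω - ω'‖ ^ 2 := by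
      have hc2 : c ^ 2 = L ^ 2 / (L ^ 2 + 1) := by
        rw [hc, div_pow, hsq]
      have hL2 : (0:ℝ) < L ^ 2 := by positivity
      rw [hc2]
      rw [div_mul_eq_mul_div, le_div_iff₀ (by positivity)]
      have expand : ‖ω - ω'‖ ^ 2 ≥ ‖d‖ ^ 2 + ‖e‖ ^ 2 := by
        rw [hnorm]; nlinarith
      have h3 : ‖e‖ ^ 2 ≥ ‖d‖ ^ 2 / L ^ 2 := by
        have := hinvsq
        rw [div_pow, one_pow] at this
        calc ‖d‖ ^ 2 / L ^ 2 = 1 / L ^ 2 * ‖d‖ ^ 2 := by ring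
          _ ≤ ‖e‖ ^ 2 := this
      have h4 : ‖ω - ω'‖ ^ 2 ≥ ‖d‖ ^ 2 * (1 + 1 / L ^ 2) := by
        have : ‖d‖ ^ 2 * (1 + 1 / L ^ 2) = ‖d‖ ^ 2 + ‖d‖ ^ 2 / L ^ 2 := by
          field_simp
        rw [this]; linarith
      calc ‖d‖ ^ 2 * (L ^ 2 + 1) = (‖d‖ ^ 2 * (1 + 1 / L ^ 2)) * L ^ 2 := by
            field_simp
        _ ≤ ‖ω - ω'‖ ^ 2 * L ^ 2 :=
            mul_le_mul_of_nonneg_right h4 (by positivity)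
        _ = L ^ 2 * ‖ω - ω'‖ ^ 2 := by ring
    have hfinal : ‖d‖ ≤ c * ‖ω - ω'‖ := by
      have h5 : ‖d‖ ^ 2 ≤ (c * ‖ω - ω'‖) ^ 2 := by
        rw [mul_pow]; exact hkey
      calc ‖d‖ = Real.sqrt (‖d‖ ^ 2) := (Real.sqrt_sq (norm_nonneg _)).symm
        _ ≤ Real.sqrt ((c * ‖ω - ω'‖) ^ 2) := Real.sqrt_le_sqrt h5
        _ = c * ‖ω - ω'‖ := Real.sqrt_sq (by positivity)
    exact hfinal
  · -- c < 1
    rw [hc, div_lt_one hsqpos]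
    have : L ^ 2 < L ^ 2 + 1 := by linarith
    calc L = Real.sqrt (L ^ 2) := by rw [Real.sqrt_sq hL.le]
      _ < Real.sqrt (L ^ 2 + 1) := Real.sqrt_lt_sqrt (by positivity) this
end
end

section
/- The block matrix Φ_{τ,σ} = [[(1/τ)Iₙ, -Aᵀ], [-A, (1/σ)I_m]] with τ, σ > 0 is symmetric positive definite whenever τσ‖A‖² < 1, where ‖A‖ is the operator (spectral) norm of A ∈ ℝ^{m×n}. -/
noncomputable section
open Matrix

/-- The operator (spectral) norm of a matrix. -/
noncomputable def opNorm {m n : ℕ} (A : Matrix (Fin m) (Fin n) ℝ) : ℝ :=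
  ‖(Matrix.toEuclideanLin A).toContinuousLinearMap‖

lemma opNorm_nonneg {m n : ℕ} (A : Matrix (Fin m) (Fin n) ℝ) : 0 ≤ opNorm A :=
  norm_nonneg _

lemma dot_bound {m n : ℕ} (A : Matrix (Fin m) (Fin n) ℝ) (x : Fin n → ℝ) (y : Fin m → ℝ) :
    y ⬝ᵥ (A *ᵥ x) ≤ opNorm A * Real.sqrt (x ⬝ᵥ x) * Real.sqrt (y ⬝ᵥ y) := by
  set x' : EuclideanSpace ℝ (Fin n) := (WithLp.equiv 2 _).symm x with hx'
  set y' : EuclideanSpace ℝ (Fin m) := (WithLp.equiv 2 _).symm y with hy'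
  have hxn : Real.sqrt (x ⬝ᵥ x) = ‖x'‖ := by
    rw [EuclideanSpace.norm_eq]
    congr 1
    simp [dotProduct, Real.norm_eq_abs, sq_abs, sq, hx', hy', WithLp.equiv_symm_apply, PiLp.toLp_apply]
  have hyn : Real.sqrt (y ⬝ᵥ y) = ‖y'‖ := by
    rw [EuclideanSpace.norm_eq]
    congr 1
    simp [dotProduct, Real.norm_eq_abs, sq_abs, sq, hx', hy', WithLp.equiv_symm_apply, PiLp.toLp_apply]
  have hinner : y ⬝ᵥ (A *ᵥ x) = (inner ℝ y' (Matrix.toEuclideanLin A x') : ℝ) := by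
    rw [PiLp.inner_apply]
    simp [dotProduct, toEuclideanLin_apply, hx', hy', WithLp.equiv_symm_apply, PiLp.toLp_apply, mul_comm]
  rw [hinner, hxn, hyn]
  calc (inner ℝ y' (Matrix.toEuclideanLin A x') : ℝ) ≤ ‖y'‖ * ‖Matrix.toEuclideanLin A x'‖ :=
        real_inner_le_norm _ _
    _ ≤ ‖y'‖ * (opNorm A * ‖x'‖) := by
        apply mul_le_mul_of_nonneg_left _ (norm_nonneg _)
        exact (Matrix.toEuclideanLin A).toContinuousLinearMap.le_opNorm x'
    _ = opNorm A * ‖x'‖ * ‖y'‖ := by ring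

lemma quad_aux (k u v : ℝ) (hk1 : k < 1) (hu : 0 ≤ u) (hv : 0 ≤ v)
    (huv : 0 < u ∨ 0 < v) : 2 * (k * u * v) < u ^ 2 + v ^ 2 := by
  rcases huv with h | h
  · rcases eq_or_lt_of_le hv with h0 | h0
    · subst h0; nlinarith [mul_pos h h]
    · nlinarith [sq_nonneg (u - v), mul_pos h h0]
  · rcases eq_or_lt_of_le hu with h0 | h0
    · subst h0; nlinarith [mul_pos h h]
    · nlinarith [sq_nonneg (u - v), mul_pos h0 h]

lemma quad_pos (τ σ c a b : ℝ) (hτ : 0 < τ) (hσ : 0 < σ) (hc : 0 ≤ c)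
    (h : τ * σ * c ^ 2 < 1) (ha : 0 ≤ a) (hb : 0 ≤ b) (hab : 0 < a ∨ 0 < b) :
    2 * (c * a * b) < τ⁻¹ * a ^ 2 + σ⁻¹ * b ^ 2 := by
  set s := Real.sqrt τ with hsdef
  set t := Real.sqrt σ with htdef
  have hs : 0 < s := Real.sqrt_pos.2 hτ
  have ht : 0 < t := Real.sqrt_pos.2 hσ
  have hs2 : s ^ 2 = τ := Real.sq_sqrt hτ.le
  have ht2 : t ^ 2 = σ := Real.sq_sqrt hσ.le
  have hcst : 0 ≤ c * s * t := mul_nonneg (mul_nonneg hc hs.le) ht.le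
  have hsq : (c * s * t) ^ 2 = τ * σ * c ^ 2 := by rw [← hs2, ← ht2]; ring
  have hk1 : c * s * t < 1 := by nlinarith [hsq]
  have huv : 0 < a / s ∨ 0 < b / t := by
    rcases hab with h' | h'
    · exact Or.inl (div_pos h' hs)
    · exact Or.inr (div_pos h' ht)
  have key := quad_aux (c * s * t) (a / s) (b / t) hk1 (by positivity) (by positivity) huv
  have h1 : 2 * ((c * s * t) * (a / s) * (b / t)) = 2 * (c * a * b) := by
    field_simp
  have h2 : (a / s) ^ 2 + (b / t) ^ 2 = τ⁻¹ * a ^ 2 + σ⁻¹ * b ^ 2 := by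
    rw [div_pow, div_pow, hs2, ht2]; ring
  rw [h1, h2] at key
  exact key

/-- The preconditioning matrix `Φ_{τ,σ} = [[(1/τ)Iₙ, -Aᵀ], [-A, (1/σ)I_m]]` is
symmetric positive definite whenever `τσ‖A‖² < 1`. -/
theorem Phi_posDef
    (n m : ℕ) (τ σ : ℝ) (hτ : 0 < τ) (hσ : 0 < σ)
    (A : Matrix (Fin m) (Fin n) ℝ)
    (h : τ * σ * (opNorm A) ^ 2 < 1) :
    (Matrix.fromBlocks (τ⁻¹ • (1 : Matrix (Fin n) (Fin n) ℝ)) (-Aᵀ) (-A)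
      (σ⁻¹ • (1 : Matrix (Fin m) (Fin m) ℝ))).PosDef := by
  rw [Matrix.posDef_iff_dotProduct_mulVec]
  constructor
  · simp [Matrix.IsHermitian, fromBlocks_conjTranspose, fromBlocks_transpose, transpose_smul]
  · intro z hz
    set x : Fin n → ℝ := z ∘ Sum.inl with hx
    set y : Fin m → ℝ := z ∘ Sum.inr with hy
    have hzelim : z = Sum.elim x y := by ext (i | i) <;> rfl
    have hstar : star z = z := by simp
    have key : star z ⬝ᵥ (Matrix.fromBlocks (τ⁻¹ • (1 : Matrix (Fin n) (Fin n) ℝ)) (-Aᵀ) (-A)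
        (σ⁻¹ • (1 : Matrix (Fin m) (Fin m) ℝ))) *ᵥ z
        = τ⁻¹ * (x ⬝ᵥ x) + σ⁻¹ * (y ⬝ᵥ y) - 2 * (y ⬝ᵥ (A *ᵥ x)) := by
      rw [hstar]
      conv_lhs => rw [hzelim]
      rw [fromBlocks_mulVec, sumElim_dotProduct_sumElim]
      simp only [Sum.elim_comp_inl, Sum.elim_comp_inr, smul_mulVec, one_mulVec,
        neg_mulVec, dotProduct_add, dotProduct_smul, dotProduct_neg, smul_eq_mul]
      have ht : x ⬝ᵥ (Aᵀ *ᵥ y) = y ⬝ᵥ (A *ᵥ x) := by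
        rw [dotProduct_mulVec, vecMul_transpose, dotProduct_comm]
      rw [ht]
      ring
    rw [key]
    -- nonneg of dotProduct self and sqrt setup
    have hxx : 0 ≤ x ⬝ᵥ x := Finset.sum_nonneg fun i _ => mul_self_nonneg _
    have hyy : 0 ≤ y ⬝ᵥ y := Finset.sum_nonneg fun i _ => mul_self_nonneg _
    set a := Real.sqrt (x ⬝ᵥ x) with hadef
    set b := Real.sqrt (y ⬝ᵥ y) with hbdef
    have ha2 : a ^ 2 = x ⬝ᵥ x := Real.sq_sqrt hxx
    have hb2 : b ^ 2 = y ⬝ᵥ y := Real.sq_sqrt hyy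
    have hbound : y ⬝ᵥ (A *ᵥ x) ≤ opNorm A * a * b := dot_bound A x y
    have hab : 0 < a ∨ 0 < b := by
      by_contra hcon
      push_neg at hcon
      have ha0 : a = 0 := le_antisymm hcon.1 (Real.sqrt_nonneg _)
      have hb0 : b = 0 := le_antisymm hcon.2 (Real.sqrt_nonneg _)
      apply hz
      ext (i | i)
      · have : x ⬝ᵥ x = 0 := by rw [← ha2, ha0]; ring
        have := (Finset.sum_eq_zero_iff_of_nonneg (fun i _ => mul_self_nonneg (x i))).1 this
          i (Finset.mem_univ i)
        simpa [mul_self_eq_zero, hx] using this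
      · have : y ⬝ᵥ y = 0 := by rw [← hb2, hb0]; ring
        have := (Finset.sum_eq_zero_iff_of_nonneg (fun i _ => mul_self_nonneg (y i))).1 this
          i (Finset.mem_univ i)
        simpa [mul_self_eq_zero, hy] using this
    have hq := quad_pos τ σ (opNorm A) a b hτ hσ (opNorm_nonneg A) h
      (Real.sqrt_nonneg _) (Real.sqrt_nonneg _) hab
    rw [← ha2, ← hb2]
    nlinarith [hbound, hq]
end
end

section
/- Let f : ℝ^n → ℝ be convex and L_f-smooth, g : ℝ^m → ℝ be μ_g-strongly convex and L_g-smooth, and A ∈ ℝ^{m×n} with λ_min(AᵀA) > 0. Then for all η > 0 satisfying η < 1/‖A‖ and η < C_M := μ_g λ_min(AᵀA) / (λ_min(AᵀA)λ_max(AAᵀ) + (1/4)(L_f+L_g)²‖A‖²), the saddle-point operator F(x,y) = (∇f(x)+Aᵀy, ∇g(y)-Ax) is strongly monotone with respect to the weighted inner product ⟨·,·⟩_{Φ_η}, where Φ_η = [[Iₙ, -ηAᵀ], [-ηA, I_m]]: there exists μ_η > 0 such that ⟨F(ω)-F(ω'), ω-ω'⟩_{Φ_η} ≥ μ_η ‖ω-ω'‖²_{Φ_η}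 for all ω, ω'. -/
noncomputable section
open Matrix

noncomputable def qform {ι : Type*} [Fintype ι] [DecidableEq ι]
    (M : Matrix ι ι ℝ) (v : EuclideanSpace ℝ ι) : ℝ :=
  inner ℝ (Matrix.toEuclideanLin M v) v

noncomputable def lambdaMin {ι : Type*} [Fintype ι] [DecidableEq ι]
    (M : Matrix ι ι ℝ) : ℝ :=
  ⨅ v : Metric.sphere (0 : EuclideanSpace ℝ ι) 1, qform M (v : EuclideanSpace ℝ ι)

noncomputable def lambdaMax {ι : Type*} [Fintype ι] [DecidableEq ι]
    (M : Matrix ι ι ℝ) : ℝ :=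
  ⨆ v : Metric.sphere (0 : EuclideanSpace ℝ ι) 1, qform M (v : EuclideanSpace ℝ ι)

/-- The inner product weighted by `Φ_η = [[Iₙ, -ηAᵀ],[-ηA, I_m]]`:
`⟨u, v⟩_{Φ_η} = ⟨u₁ - ηAᵀu₂, v₁⟩ + ⟨u₂ - ηAu₁, v₂⟩`. -/
noncomputable def wipEta {n m : ℕ} (η : ℝ) (A : Matrix (Fin m) (Fin n) ℝ)
    (u v : Evec n × Evec m) : ℝ :=
  (inner ℝ (u.1 - η • Matrix.toEuclideanLin Aᵀ u.2) v.1 : ℝ) +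
    (inner ℝ (u.2 - η • Matrix.toEuclideanLin A u.1) v.2 : ℝ)

section AuxGen
variable {ι κ : Type*} [Fintype ι] [Fintype κ] [DecidableEq ι] [DecidableEq κ]

theorem my_adj (A : Matrix ι κ ℝ) (u : EuclideanSpace ℝ ι) (v : EuclideanSpace ℝ κ) :
    (inner ℝ (Matrix.toEuclideanLin Aᵀ u) v : ℝ) = inner ℝ u (Matrix.toEuclideanLin A v) := by
  simp only [Matrix.toEuclideanLin_apply, EuclideanSpace.inner_eq_star_dotProduct,
    WithLp.ofLp_toLp, star_trivial]
  rw [Matrix.dotProduct_mulVec, Matrix.vecMul_transpose]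

theorem my_teL_mul {τ : Type*} [Fintype τ] [DecidableEq τ]
    (A : Matrix ι κ ℝ) (B : Matrix κ τ ℝ) (v : EuclideanSpace ℝ τ) :
    Matrix.toEuclideanLin (A * B) v = Matrix.toEuclideanLin A (Matrix.toEuclideanLin B v) := by
  simp [Matrix.toEuclideanLin_apply, Matrix.mulVec_mulVec]

theorem my_qform_smul (M : Matrix ι ι ℝ) (c : ℝ) (v : EuclideanSpace ℝ ι) :
    qform M (c • v) = c ^ 2 * qform M v := by
  simp only [qform, _root_.map_smul, real_inner_smul_left, real_inner_smul_right]
  ring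

theorem my_qform_cont (M : Matrix ι ι ℝ) : Continuous (qform M) := by
  have : Continuous fun v : EuclideanSpace ℝ ι =>
      (inner ℝ ((Matrix.toEuclideanLin M).toContinuousLinearMap v) v : ℝ) :=
    Continuous.inner (Matrix.toEuclideanLin M).toContinuousLinearMap.continuous continuous_id
  exact this

theorem my_bddBelow (M : Matrix ι ι ℝ) :
    BddBelow (Set.range fun v : Metric.sphere (0 : EuclideanSpace ℝ ι) 1 =>
      qform M (v : EuclideanSpace ℝ ι)) := by
  have := ((isCompact_sphere (0 : EuclideanSpace ℝ ι) 1).image (my_qform_cont M)).bddBelow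
  rwa [Set.image_eq_range] at this

theorem my_bddAbove (M : Matrix ι ι ℝ) :
    BddAbove (Set.range fun v : Metric.sphere (0 : EuclideanSpace ℝ ι) 1 =>
      qform M (v : EuclideanSpace ℝ ι)) := by
  have := ((isCompact_sphere (0 : EuclideanSpace ℝ ι) 1).image (my_qform_cont M)).bddAbove
  rwa [Set.image_eq_range] at this

theorem my_lambdaMin_le (M : Matrix ι ι ℝ) (v : EuclideanSpace ℝ ι) :
    lambdaMin M * ‖v‖ ^ 2 ≤ qform M v := by
  rcases eq_or_ne v 0 with rfl | hv
  · simp [qform]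
  · have hvn : (0:ℝ) < ‖v‖ := norm_pos_iff.mpr hv
    have hmem : (‖v‖⁻¹ • v) ∈ Metric.sphere (0 : EuclideanSpace ℝ ι) 1 := by
      simp [norm_smul, abs_of_nonneg (inv_nonneg.mpr hvn.le), inv_mul_cancel₀ hvn.ne']
    have h := ciInf_le (my_bddBelow M) (⟨_, hmem⟩ : Metric.sphere (0 : EuclideanSpace ℝ ι) 1)
    rw [my_qform_smul] at h
    have h2 := mul_le_mul_of_nonneg_right h (by positivity : (0:ℝ) ≤ ‖v‖ ^ 2)
    calc lambdaMin M * ‖v‖ ^ 2 ≤ (‖v‖⁻¹ ^ 2 * qform M v) * ‖v‖ ^ 2 := h2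
      _ = qform M v := by field_simp

theorem my_le_lambdaMax (M : Matrix ι ι ℝ) (v : EuclideanSpace ℝ ι) :
    qform M v ≤ lambdaMax M * ‖v‖ ^ 2 := by
  rcases eq_or_ne v 0 with rfl | hv
  · simp [qform]
  · have hvn : (0:ℝ) < ‖v‖ := norm_pos_iff.mpr hv
    have hmem : (‖v‖⁻¹ • v) ∈ Metric.sphere (0 : EuclideanSpace ℝ ι) 1 := by
      simp [norm_smul, abs_of_nonneg (inv_nonneg.mpr hvn.le), inv_mul_cancel₀ hvn.ne']
    have h := le_ciSup (my_bddAbove M) (⟨_, hmem⟩ : Metric.sphere (0 : EuclideanSpace ℝ ι) 1)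
    rw [my_qform_smul] at h
    have h2 := mul_le_mul_of_nonneg_right h (by positivity : (0:ℝ) ≤ ‖v‖ ^ 2)
    calc qform M v = (‖v‖⁻¹ ^ 2 * qform M v) * ‖v‖ ^ 2 := by field_simp
      _ ≤ lambdaMax M * ‖v‖ ^ 2 := h2

theorem my_lambdaMax_nonneg (M : Matrix ι ι ℝ) (h : ∀ v, 0 ≤ qform M v) :
    0 ≤ lambdaMax M := by
  rcases isEmpty_or_nonempty (Metric.sphere (0 : EuclideanSpace ℝ ι) 1) with he | hne
  · rw [lambdaMax, Real.iSup_of_isEmpty]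
  · obtain ⟨v⟩ := hne
    exact (h v).trans (le_ciSup (my_bddAbove M) v)

end AuxGen

theorem my_quad_key (p r q c a b : ℝ) (hp : 0 < p) (hr : 0 < r) (hq : 0 ≤ q)
    (hdet : q ^ 2 < p * r) (hc : c * (p + r) = p * r - q ^ 2) (ha : 0 ≤ a) (hb : 0 ≤ b) :
    c * (a ^ 2 + b ^ 2) ≤ p * a ^ 2 + r * b ^ 2 - 2 * q * a * b := by
  have hpr : 0 < p + r := by linarith
  have hc0 : 0 < c := by nlinarith
  have hpc : 0 < p - c := by nlinarith
  nlinarith [sq_nonneg ((p - c) * a - q * b), sq_nonneg (c * b), mul_nonneg (mul_nonneg ha hb) hq,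
    mul_pos hpc hpr, sq_nonneg b]

theorem my_Wle (η N a b ip W : ℝ) (hη : 0 ≤ η) (hN : 0 ≤ N)
    (hW : W = a ^ 2 + b ^ 2 - 2 * η * ip) (hip : -(N * a * b) ≤ ip) :
    W ≤ (1 + η * N) * (a ^ 2 + b ^ 2) := by
  have e1 := mul_le_mul_of_nonneg_left hip hη
  have e2 : 0 ≤ η * N * (a - b) ^ 2 := mul_nonneg (mul_nonneg hη hN) (sq_nonneg _)
  nlinarith [e1, e2]

theorem my_step2 (η lam Lam μg Lf Lg N a b i1 i2 tx ty i5 i6 : ℝ)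
    (hη : 0 ≤ η) (h1 : 0 ≤ i1) (h2 : μg * b ^ 2 ≤ i2) (h3 : lam * a ^ 2 ≤ tx)
    (h4 : ty ≤ Lam * b ^ 2) (h5 : i5 ≤ Lg * b * (N * a)) (h6 : i6 ≤ N * (Lf * a) * b) :
    η * lam * a ^ 2 + (μg - η * Lam) * b ^ 2 - 2 * (η * (Lf + Lg) * N / 2) * a * b
      ≤ i1 + i2 + η * tx - η * ty - η * i5 - η * i6 := by
  have e3 := mul_le_mul_of_nonneg_left h3 hη
  have e4 := mul_le_mul_of_nonneg_left h4 hη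
  have e5 := mul_le_mul_of_nonneg_left h5 hη
  have e6 := mul_le_mul_of_nonneg_left h6 hη
  nlinarith [e3, e4, e5, e6, h1, h2]


set_option maxHeartbeats 800000 in
/-- For `η > 0` small enough (namely `η < 1/‖A‖` and `η < C_M`), the saddle-point
operator `F(x,y) = (∇f(x)+Aᵀy, ∇g(y)-Ax)` is strongly monotone with respect to the
weighted inner product `⟨·,·⟩_{Φ_η}`. -/
theorem saddle_operator_stronglyMonotone_weighted
    (n m : ℕ) (Lf Lg μg : ℝ) (hLf : 0 ≤ Lf) (hμg : 0 < μg) (hμLg : μg ≤ Lg)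
    (A : Matrix (Fin m) (Fin n) ℝ) (hA : 0 < lambdaMin (Aᵀ * A))
    (f : Evec n → ℝ) (g : Evec m → ℝ)
    (hdf : ∀ x, HasGradientAt f (gradient f x) x)
    (hdg : ∀ y, HasGradientAt g (gradient g y) y)
    (hfconv : ∀ x x', (0 : ℝ) ≤ (inner ℝ (gradient f x - gradient f x') (x - x') : ℝ))
    (hfsmooth : ∀ x x', ‖gradient f x - gradient f x'‖ ≤ Lf * ‖x - x'‖)
    (hg1 : ∀ y y', μg * ‖y - y'‖ ^ 2 ≤ (inner ℝ (gradient g y - gradient g y') (y - y') : ℝ))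
    (hg2 : ∀ y y', ‖gradient g y - gradient g y'‖ ≤ Lg * ‖y - y'‖)
    (η : ℝ) (hη0 : 0 < η) (hη1 : η * opNorm A < 1)
    (hη2 : η < μg * lambdaMin (Aᵀ * A) /
      (lambdaMin (Aᵀ * A) * lambdaMax (A * Aᵀ) + (1 / 4) * (Lf + Lg) ^ 2 * (opNorm A) ^ 2)) :
    ∃ μη > (0 : ℝ), ∀ x x' y y',
      μη * wipEta η A (x - x', y - y') (x - x', y - y') ≤
        wipEta η A
          (gradient f x - gradient f x' + Matrix.toEuclideanLin Aᵀ (y - y'),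
            gradient g y - gradient g y' - Matrix.toEuclideanLin A (x - x'))
          (x - x', y - y') := by
  classical
  -- auxiliary facts stated with the original terms
  have hTle0 : ∀ v : Evec n, ‖Matrix.toEuclideanLin A v‖ ≤ opNorm A * ‖v‖ := fun v =>
    (Matrix.toEuclideanLin A).toContinuousLinearMap.le_opNorm v
  have h3'' : ∀ v : Evec n, lambdaMin (Aᵀ * A) * ‖v‖ ^ 2 ≤ ‖Matrix.toEuclideanLin A v‖ ^ 2 := by
    intro v
    have h := my_lambdaMin_le (Aᵀ * A) v
    rwa [qform, my_teL_mul, my_adj, real_inner_self_eq_norm_sq] at h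
  have h4'' : ∀ v : Evec m, ‖Matrix.toEuclideanLin Aᵀ v‖ ^ 2 ≤ lambdaMax (A * Aᵀ) * ‖v‖ ^ 2 := by
    intro v
    have h := my_le_lambdaMax (A * Aᵀ) v
    rwa [qform, my_teL_mul, real_inner_comm, ← my_adj, real_inner_self_eq_norm_sq] at h
  have hLam0' : 0 ≤ lambdaMax (A * Aᵀ) := by
    refine my_lambdaMax_nonneg _ (fun v => ?_)
    rw [qform, my_teL_mul, real_inner_comm, ← my_adj, real_inner_self_eq_norm_sq]
    positivity
  have hadj0 : ∀ (u : Evec m) (v : Evec n),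
      (inner ℝ (Matrix.toEuclideanLin Aᵀ u) v : ℝ) = inner ℝ u (Matrix.toEuclideanLin A v) :=
    my_adj A
  -- generalize everything to opaque constants
  obtain ⟨T, hT⟩ : ∃ L : Evec n →ₗ[ℝ] Evec m, Matrix.toEuclideanLin A = L := ⟨_, rfl⟩
  obtain ⟨Tt, hTt⟩ : ∃ L : Evec m →ₗ[ℝ] Evec n, Matrix.toEuclideanLin Aᵀ = L := ⟨_, rfl⟩
  obtain ⟨N, hN⟩ : ∃ t : ℝ, opNorm A = t := ⟨_, rfl⟩
  obtain ⟨lam, hlam⟩ : ∃ t : ℝ, lambdaMin (Aᵀ * A) = t := ⟨_, rfl⟩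
  obtain ⟨Lam, hLam⟩ : ∃ t : ℝ, lambdaMax (A * Aᵀ) = t := ⟨_, rfl⟩
  rw [hN] at hη1
  rw [hlam] at hA
  rw [hN, hlam, hLam] at hη2
  rw [hT, hN] at hTle0
  rw [hT, hlam] at h3''
  rw [hTt, hLam] at h4''
  rw [hLam] at hLam0'
  rw [hT, hTt] at hadj0
  have hN0 : 0 ≤ N := hN ▸ norm_nonneg _
  have hLg : 0 < Lg := lt_of_lt_of_le hμg hμLg
  -- scalar estimates
  have hD0 : (0:ℝ) < lam * Lam + 1 / 4 * (Lf + Lg) ^ 2 * N ^ 2 := by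
    by_contra h
    push_neg at h
    have hle : μg * lam / (lam * Lam + 1 / 4 * (Lf + Lg) ^ 2 * N ^ 2) ≤ 0 :=
      div_nonpos_of_nonneg_of_nonpos (mul_nonneg hμg.le hA.le) h
    linarith
  have key : η * (lam * Lam + 1 / 4 * (Lf + Lg) ^ 2 * N ^ 2) < μg * lam :=
    (lt_div_iff₀ hD0).mp hη2
  have hLamη : η * Lam < μg := by
    nlinarith [hA, mul_nonneg hη0.le (sq_nonneg ((Lf + Lg) * N / 2))]
  have hp : 0 < η * lam := mul_pos hη0 hA
  have hr : 0 < μg - η * Lam := sub_pos.mpr hLamη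
  have hq : 0 ≤ η * (Lf + Lg) * N / 2 := by
    have := mul_nonneg (mul_nonneg hη0.le (by linarith : (0:ℝ) ≤ Lf + Lg)) hN0
    linarith
  have hdet : (η * (Lf + Lg) * N / 2) ^ 2 < (η * lam) * (μg - η * Lam) := by
    have he : (η * lam) * (μg - η * Lam) - (η * (Lf + Lg) * N / 2) ^ 2
        = η * (μg * lam - η * (lam * Lam + 1 / 4 * (Lf + Lg) ^ 2 * N ^ 2)) := by ring
    nlinarith [mul_pos hη0 (sub_pos.mpr key)]
  obtain ⟨c, hc⟩ : ∃ t : ℝ,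
      ((η * lam) * (μg - η * Lam) - (η * (Lf + Lg) * N / 2) ^ 2)
        / ((η * lam) + (μg - η * Lam)) = t := ⟨_, rfl⟩
  have hsum : (0:ℝ) < (η * lam) + (μg - η * Lam) := by linarith
  have hc0 : 0 < c := hc ▸ div_pos (by linarith) hsum
  have hcmul : c * ((η * lam) + (μg - η * Lam))
      = (η * lam) * (μg - η * Lam) - (η * (Lf + Lg) * N / 2) ^ 2 := by
    rw [← hc, div_mul_cancel₀ _ hsum.ne']
  have hone : (0:ℝ) < 1 + η * N := by
    have := mul_nonneg hη0.le hN0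
    linarith
  refine ⟨c / (1 + η * N), div_pos hc0 hone, ?_⟩
  intro x x' y y'
  rw [hT, hTt]
  set dx := x - x' with hdx
  set dy := y - y' with hdy
  set df := gradient f x - gradient f x' with hdfd
  set dg := gradient g y - gradient g y' with hdgd
  have hc1 : (inner ℝ (T (Tt dy)) dy : ℝ) = inner ℝ (Tt dy) (Tt dy) :=
    (real_inner_comm _ _).trans (hadj0 dy (Tt dy)).symm
  have hc2 : (inner ℝ dy (T dx) : ℝ) = inner ℝ (T dx) dy := real_inner_comm _ _
  have hRHS : wipEta η A (df + Tt dy, dg - T dx) (dx, dy)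
      = (inner ℝ df dx : ℝ) + (inner ℝ dg dy : ℝ) + η * ‖T dx‖ ^ 2 - η * ‖Tt dy‖ ^ 2
        - η * (inner ℝ dg (T dx) : ℝ) - η * (inner ℝ (T df) dy : ℝ) := by
    simp only [wipEta, hT, hTt, map_sub, map_add, inner_sub_left, inner_add_left,
      real_inner_smul_left]
    rw [hadj0 dy dx, hadj0 dg dx, hadj0 (T dx) dx, hc1, hc2,
      real_inner_self_eq_norm_sq, real_inner_self_eq_norm_sq]
    ring
  have hW : wipEta η A (dx, dy) (dx, dy)
      = ‖dx‖ ^ 2 + ‖dy‖ ^ 2 - 2 * η * (inner ℝ (T dx) dy : ℝ) := by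
    simp only [wipEta, hT, hTt, inner_sub_left, real_inner_smul_left]
    rw [hadj0 dy dx, hc2, real_inner_self_eq_norm_sq, real_inner_self_eq_norm_sq]
    ring
  have h1 : (0:ℝ) ≤ inner ℝ df dx := hfconv x x'
  have h2 : μg * ‖dy‖ ^ 2 ≤ (inner ℝ dg dy : ℝ) := hg1 y y'
  have h3 : lam * ‖dx‖ ^ 2 ≤ ‖T dx‖ ^ 2 := h3'' dx
  have h4 : ‖Tt dy‖ ^ 2 ≤ Lam * ‖dy‖ ^ 2 := h4'' dy
  have h5 : (inner ℝ dg (T dx) : ℝ) ≤ Lg * ‖dy‖ * (N * ‖dx‖) :=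
    (real_inner_le_norm _ _).trans
      (mul_le_mul (hg2 y y') (hTle0 dx) (norm_nonneg _)
        (mul_nonneg hLg.le (norm_nonneg _)))
  have h6 : (inner ℝ (T df) dy : ℝ) ≤ N * (Lf * ‖dx‖) * ‖dy‖ :=
    (real_inner_le_norm _ _).trans
      (mul_le_mul_of_nonneg_right
        ((hTle0 df).trans (mul_le_mul_of_nonneg_left (hfsmooth x x') hN0)) (norm_nonneg _))
  have h7' : -(N * ‖dx‖ * ‖dy‖) ≤ (inner ℝ (T dx) dy : ℝ) := by
    have hh : (inner ℝ (T dx) (-dy) : ℝ) ≤ N * ‖dx‖ * ‖dy‖ := by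
      calc (inner ℝ (T dx) (-dy) : ℝ) ≤ ‖T dx‖ * ‖-dy‖ := real_inner_le_norm _ _
        _ = ‖T dx‖ * ‖dy‖ := by rw [norm_neg]
        _ ≤ N * ‖dx‖ * ‖dy‖ := mul_le_mul_of_nonneg_right (hTle0 dx) (norm_nonneg _)
    rw [inner_neg_right] at hh
    linarith
  have hquad : c * (‖dx‖ ^ 2 + ‖dy‖ ^ 2)
      ≤ (η * lam) * ‖dx‖ ^ 2 + (μg - η * Lam) * ‖dy‖ ^ 2
        - 2 * (η * (Lf + Lg) * N / 2) * ‖dx‖ * ‖dy‖ :=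
    my_quad_key _ _ _ _ _ _ hp hr hq hdet hcmul (norm_nonneg _) (norm_nonneg _)
  have hWle : wipEta η A (dx, dy) (dx, dy) ≤ (1 + η * N) * (‖dx‖ ^ 2 + ‖dy‖ ^ 2) :=
    my_Wle η N ‖dx‖ ‖dy‖ _ _ hη0.le hN0 hW h7'
  have step1 : c / (1 + η * N) * wipEta η A (dx, dy) (dx, dy) ≤ c * (‖dx‖ ^ 2 + ‖dy‖ ^ 2) := by
    have hm := mul_le_mul_of_nonneg_left hWle (le_of_lt (div_pos hc0 hone))
    calc c / (1 + η * N) * wipEta η A (dx, dy) (dx, dy)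
        ≤ c / (1 + η * N) * ((1 + η * N) * (‖dx‖ ^ 2 + ‖dy‖ ^ 2)) := hm
      _ = c * (‖dx‖ ^ 2 + ‖dy‖ ^ 2) := by
          rw [← mul_assoc, div_mul_cancel₀ _ hone.ne']
  have step2 : (η * lam) * ‖dx‖ ^ 2 + (μg - η * Lam) * ‖dy‖ ^ 2
        - 2 * (η * (Lf + Lg) * N / 2) * ‖dx‖ * ‖dy‖
      ≤ wipEta η A (df + Tt dy, dg - T dx) (dx, dy) := by
    rw [hRHS]
    exact my_step2 η lam Lam μg Lf Lg N ‖dx‖ ‖dy‖ _ _ _ _ _ _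
      hη0.le h1 h2 h3 h4 h5 h6
  exact le_trans step1 (le_trans hquad step2)
end
end

section
/- Let f : ℝ^n → ℝ ∪ {∞} be proper, convex, closed (possibly with μ_f = 0, i.e., merely convex, or μ_f-strongly convex), A ∈ ℝ^{m×n}, and τσ‖A‖² < 1 with Φ_{τ,σ} = [[(1/τ)Iₙ,-Aᵀ],[-A,(1/σ)I_m]] ≻ 0. Let F_b(x,y) = (∂f(x)+Aᵀy, -Ax) and let J = (Id + Φ_{τ,σ}^{-1}F_b)^{-1} be the (single-valued) resolvent. Then for all ω, ω' ∈ ℝ^{n+m}, ‖J(ω) - J(ω')‖²_{Φ_{τ,σ} + Ψ_b} ≤ ‖ω - ω'‖²_{Φ_{τ,σ}}, where Ψ_b = diag(γ_x Iₙ, 0_{m×m}) with γ_x = λ_min(Φ_{τ,σ}^{-1}) λ_min(AᵀA) + 2μ_f. -/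
noncomputable section
open Matrix

/-- The convex subdifferential of an extended-real-valued function. -/
def subdiff {n : ℕ} (f : Evec n → EReal) (x : Evec n) : Set (Evec n) :=
  {v | ∀ z, f x + (((inner ℝ v (z - x) : ℝ)) : EReal) ≤ f z}

/-- The inner ℝ product weighted by `Φ_{τ,σ} = [[(1/τ)Iₙ,-Aᵀ],[-A,(1/σ)I_m]]`. -/
noncomputable def wPhi {n m : ℕ} (τ σ : ℝ) (A : Matrix (Fin m) (Fin n) ℝ)
    (u v : Evec n × Evec m) : ℝ :=
  (inner ℝ (τ⁻¹ • u.1 - Matrix.toEuclideanLin Aᵀ u.2) v.1 : ℝ) +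
    (inner ℝ (σ⁻¹ • u.2 - Matrix.toEuclideanLin A u.1) v.2 : ℝ)

/-- The block matrix `Φ_{τ,σ}`. -/
noncomputable def PhiMat {n m : ℕ} (τ σ : ℝ) (A : Matrix (Fin m) (Fin n) ℝ) :
    Matrix (Fin n ⊕ Fin m) (Fin n ⊕ Fin m) ℝ :=
  Matrix.fromBlocks (τ⁻¹ • (1 : Matrix (Fin n) (Fin n) ℝ)) (-Aᵀ) (-A)
    (σ⁻¹ • (1 : Matrix (Fin m) (Fin m) ℝ))

namespace Aux

variable {n m : ℕ}

def emb (p : Evec n × Evec m) : EuclideanSpace ℝ (Fin n ⊕ Fin m) :=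
  (WithLp.equiv 2 ((_ : Fin n ⊕ Fin m) → ℝ)).symm
    (Sum.elim ((WithLp.equiv 2 _) p.1) ((WithLp.equiv 2 _) p.2))

lemma inner_emb (p q : Evec n × Evec m) :
    (inner ℝ (emb p) (emb q) : ℝ) = inner ℝ p.1 q.1 + inner ℝ p.2 q.2 := by
  simp [emb, PiLp.inner_apply, RCLike.inner_apply, conj_trivial, Fintype.sum_sum_type]

lemma norm_emb_sq (p : Evec n × Evec m) : ‖emb p‖ ^ 2 = ‖p.1‖ ^ 2 + ‖p.2‖ ^ 2 := by
  rw [← real_inner_self_eq_norm_sq, ← real_inner_self_eq_norm_sq,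
    ← real_inner_self_eq_norm_sq, inner_emb]

def Phap (τ σ : ℝ) (A : Matrix (Fin m) (Fin n) ℝ) (p : Evec n × Evec m) :
    Evec n × Evec m :=
  (τ⁻¹ • p.1 - Matrix.toEuclideanLin Aᵀ p.2, σ⁻¹ • p.2 - Matrix.toEuclideanLin A p.1)

lemma phi_emb (τ σ : ℝ) (A : Matrix (Fin m) (Fin n) ℝ) (p : Evec n × Evec m) :
    Matrix.toEuclideanLin (PhiMat τ σ A) (emb p) = emb (Phap τ σ A p) := by
  simp [emb, PhiMat, Phap, Matrix.toEuclideanLin_apply, Matrix.fromBlocks_mulVec,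
    smul_mulVec, Matrix.one_mulVec, Matrix.neg_mulVec, sub_eq_add_neg, add_comm]

lemma wPhi_eq (τ σ : ℝ) (A : Matrix (Fin m) (Fin n) ℝ) (u v : Evec n × Evec m) :
    wPhi τ σ A u v = inner ℝ (emb (Phap τ σ A u)) (emb v) := by
  rw [inner_emb]; rfl

lemma adj (A : Matrix (Fin m) (Fin n) ℝ) (u : Evec m) (v : Evec n) :
    (inner ℝ (Matrix.toEuclideanLin Aᵀ u) v : ℝ) = inner ℝ u (Matrix.toEuclideanLin A v) := by
  have : Aᵀ = Aᴴ := by ext i j; simp [Matrix.conjTranspose]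
  rw [this, Matrix.toEuclideanLin_conjTranspose_eq_adjoint, LinearMap.adjoint_inner_left]

lemma wPhi_formula (τ σ : ℝ) (A : Matrix (Fin m) (Fin n) ℝ) (u v : Evec n × Evec m) :
    wPhi τ σ A u v = τ⁻¹ * inner ℝ u.1 v.1 + σ⁻¹ * inner ℝ u.2 v.2
      - inner ℝ u.2 (Matrix.toEuclideanLin A v.1) - inner ℝ (Matrix.toEuclideanLin A u.1) v.2 := by
  rw [wPhi, inner_sub_left, inner_sub_left, real_inner_smul_left, real_inner_smul_left, adj]
  ring

lemma wPhi_symm (τ σ : ℝ) (A : Matrix (Fin m) (Fin n) ℝ) (u v : Evec n × Evec m) :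
    wPhi τ σ A u v = wPhi τ σ A v u := by
  rw [wPhi_formula, wPhi_formula, real_inner_comm v.1 u.1, real_inner_comm v.2 u.2,
    real_inner_comm v.2 (Matrix.toEuclideanLin A u.1),
    real_inner_comm (Matrix.toEuclideanLin A v.1) u.2]
  ring

lemma wPhi_add_left (τ σ : ℝ) (A : Matrix (Fin m) (Fin n) ℝ) (u w v : Evec n × Evec m) :
    wPhi τ σ A (u + w) v = wPhi τ σ A u v + wPhi τ σ A w v := by
  simp only [wPhi_formula, Prod.fst_add, Prod.snd_add, inner_add_left, map_add, inner_add_right]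
  ring

lemma wPhi_expand (τ σ : ℝ) (A : Matrix (Fin m) (Fin n) ℝ) (a b : Evec n × Evec m) :
    wPhi τ σ A (a + b) (a + b) =
      wPhi τ σ A a a + 2 * wPhi τ σ A b a + wPhi τ σ A b b := by
  rw [wPhi_add_left, wPhi_symm τ σ A a (a + b), wPhi_add_left, wPhi_symm τ σ A b (a + b),
    wPhi_add_left, wPhi_symm τ σ A a b]
  ring

lemma toEuclideanLin_mul {k l j : ℕ} (M : Matrix (Fin k) (Fin l) ℝ) (N : Matrix (Fin l) (Fin j) ℝ)
    (v : EuclideanSpace ℝ (Fin j)) :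
    Matrix.toEuclideanLin (M * N) v = Matrix.toEuclideanLin M (Matrix.toEuclideanLin N v) := by
  simp [Matrix.toEuclideanLin_apply, Matrix.mulVec_mulVec]

lemma toEuclideanLin_mul' {ι : Type*} [Fintype ι] [DecidableEq ι] (M N : Matrix ι ι ℝ)
    (v : EuclideanSpace ℝ ι) :
    Matrix.toEuclideanLin (M * N) v = Matrix.toEuclideanLin M (Matrix.toEuclideanLin N v) := by
  simp [Matrix.toEuclideanLin_apply, Matrix.mulVec_mulVec]

lemma qform_AtA (A : Matrix (Fin m) (Fin n) ℝ) (z : Evec n) :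
    qform (Aᵀ * A) z = ‖Matrix.toEuclideanLin A z‖ ^ 2 := by
  rw [qform, toEuclideanLin_mul, adj, real_inner_self_eq_norm_sq]

lemma qform_smul {ι : Type*} [Fintype ι] [DecidableEq ι] (M : Matrix ι ι ℝ) (c : ℝ)
    (v : EuclideanSpace ℝ ι) : qform M (c • v) = c ^ 2 * qform M v := by
  simp only [qform, LinearMap.map_smul, real_inner_smul_left, real_inner_smul_right]; ring

lemma qform_cont {ι : Type*} [Fintype ι] [DecidableEq ι] (M : Matrix ι ι ℝ) :
    Continuous (qform M) :=
  (LinearMap.continuous_of_finiteDimensional _).inner continuous_id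

lemma lambdaMin_mul_le {ι : Type*} [Fintype ι] [DecidableEq ι] (M : Matrix ι ι ℝ)
    (v : EuclideanSpace ℝ ι) : lambdaMin M * ‖v‖ ^ 2 ≤ qform M v := by
  rcases eq_or_ne v 0 with rfl | hv
  · simp [qform]
  · have hnv : (0:ℝ) < ‖v‖ := norm_pos_iff.2 hv
    set u : EuclideanSpace ℝ ι := ‖v‖⁻¹ • v with hu
    have husph : u ∈ Metric.sphere (0 : EuclideanSpace ℝ ι) 1 := by
      simp [hu, norm_smul, abs_of_pos (inv_pos.2 hnv), inv_mul_cancel₀ hnv.ne']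
    have hbdd : BddBelow (Set.range fun w : Metric.sphere (0 : EuclideanSpace ℝ ι) 1 =>
        qform M (w : EuclideanSpace ℝ ι)) := by
      have hc : IsCompact (qform M '' Metric.sphere (0 : EuclideanSpace ℝ ι) 1) :=
        (isCompact_sphere _ _).image (qform_cont M)
      have h2 : (Set.range fun w : Metric.sphere (0 : EuclideanSpace ℝ ι) 1 =>
          qform M (w : EuclideanSpace ℝ ι)) = qform M '' Metric.sphere 0 1 := by
        ext x; simp
      rw [h2]; exact hc.bddBelow
    have hle : lambdaMin M ≤ qform M u := ciInf_le hbdd ⟨u, husph⟩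
    rw [qform_smul M _ v] at hle
    have h3 := mul_le_mul_of_nonneg_right hle (by positivity : (0:ℝ) ≤ ‖v‖ ^ 2)
    calc lambdaMin M * ‖v‖ ^ 2 ≤ (‖v‖⁻¹) ^ 2 * qform M v * ‖v‖ ^ 2 := h3
    _ = qform M v := by field_simp

lemma lambdaMin_nonneg {ι : Type*} [Fintype ι] [DecidableEq ι] (M : Matrix ι ι ℝ)
    (h : ∀ v, 0 ≤ qform M v) : 0 ≤ lambdaMin M :=
  Real.iInf_nonneg fun v => h v

/-- Scalar inequality. -/
lemma scalar_pos {τ σ c a b : ℝ} (hτ : 0 < τ) (hσ : 0 < σ) (hc : 0 ≤ c)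
    (hstep : τ * σ * c ^ 2 < 1) (ha : 0 ≤ a) (hb : 0 ≤ b) (hab : 0 < a ∨ 0 < b) :
    0 < τ⁻¹ * a ^ 2 + σ⁻¹ * b ^ 2 - 2 * c * a * b := by
  have key : 0 < σ * a ^ 2 + τ * b ^ 2 - 2 * c * τ * σ * a * b := by
    set st := Real.sqrt (τ * σ) with hst
    have hst2 : st ^ 2 = τ * σ := Real.sq_sqrt (by positivity)
    have hst0 : 0 < st := Real.sqrt_pos.2 (by positivity)
    have hk : c * st < 1 := by nlinarith [mul_nonneg hc hst0.le]
    have hamgm : 2 * st * a * b ≤ σ * a ^ 2 + τ * b ^ 2 := by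
      have h1 : Real.sqrt τ * Real.sqrt σ = st := by
        rw [hst, Real.sqrt_mul hτ.le]
      have hexp : σ * (σ * a ^ 2 + τ * b ^ 2 - 2 * st * a * b) = (σ * a - st * b) ^ 2 := by
        linear_combination (-(b ^ 2)) * hst2
      nlinarith [hexp, sq_nonneg (σ * a - st * b), hσ]
    have hpos : 0 < σ * a ^ 2 + τ * b ^ 2 := by
      rcases hab with h | h
      · have : 0 < σ * a ^ 2 := by positivity
        nlinarith [mul_nonneg hτ.le (sq_nonneg b)]
      · have : 0 < τ * b ^ 2 := by positivity
        nlinarith [mul_nonneg hσ.le (sq_nonneg a)]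
    have h2 : 2 * c * τ * σ * a * b = c * st * (2 * st * a * b) := by
      linear_combination (-2) * c * a * b * hst2
    nlinarith [mul_le_mul_of_nonneg_left hamgm (mul_nonneg hc hst0.le),
      mul_pos (sub_pos.2 hk) hpos, h2]
  have hτσ : 0 < τ * σ := by positivity
  have heq : τ⁻¹ * a ^ 2 + σ⁻¹ * b ^ 2 - 2 * c * a * b
      = (τ * σ)⁻¹ * (σ * a ^ 2 + τ * b ^ 2 - 2 * c * τ * σ * a * b) := by
    field_simp
  rw [heq]
  exact mul_pos (inv_pos.2 hτσ) key


lemma opNorm_bound (A : Matrix (Fin m) (Fin n) ℝ) (z : Evec n) :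
    ‖Matrix.toEuclideanLin A z‖ ≤ opNorm A * ‖z‖ := by
  simpa [opNorm, LinearMap.coe_toContinuousLinearMap'] using
    (Matrix.toEuclideanLin A).toContinuousLinearMap.le_opNorm z

lemma wPhi_self_pos {τ σ : ℝ} (hτ : 0 < τ) (hσ : 0 < σ) {A : Matrix (Fin m) (Fin n) ℝ}
    (hstep : τ * σ * (opNorm A) ^ 2 < 1) (p : Evec n × Evec m) (hp : p ≠ 0) :
    0 < wPhi τ σ A p p := by
  have hin : (inner ℝ (Matrix.toEuclideanLin A p.1) p.2 : ℝ) ≤ opNorm A * ‖p.1‖ * ‖p.2‖ := by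
    calc (inner ℝ (Matrix.toEuclideanLin A p.1) p.2 : ℝ) ≤ ‖Matrix.toEuclideanLin A p.1‖ * ‖p.2‖ :=
          real_inner_le_norm _ _
      _ ≤ opNorm A * ‖p.1‖ * ‖p.2‖ :=
          mul_le_mul_of_nonneg_right (opNorm_bound A p.1) (norm_nonneg _)
  have hab : 0 < ‖p.1‖ ∨ 0 < ‖p.2‖ := by
    by_contra h
    push_neg at h
    apply hp
    have h1 : p.1 = 0 := norm_le_zero_iff.1 (h.1)
    have h2 : p.2 = 0 := norm_le_zero_iff.1 (h.2)
    exact Prod.ext h1 h2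
  have hc : (0:ℝ) ≤ opNorm A := norm_nonneg _
  have hs := scalar_pos (c := opNorm A) hτ hσ hc hstep (norm_nonneg p.1)
    (norm_nonneg p.2) hab
  have hf : wPhi τ σ A p p = τ⁻¹ * ‖p.1‖ ^ 2 + σ⁻¹ * ‖p.2‖ ^ 2
      - 2 * (inner ℝ (Matrix.toEuclideanLin A p.1) p.2 : ℝ) := by
    rw [wPhi_formula, real_inner_self_eq_norm_sq, real_inner_self_eq_norm_sq,
      real_inner_comm p.2 (Matrix.toEuclideanLin A p.1)]
    ring
  rw [hf]
  nlinarith [hs, hin]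

lemma wPhi_self_nonneg {τ σ : ℝ} (hτ : 0 < τ) (hσ : 0 < σ) {A : Matrix (Fin m) (Fin n) ℝ}
    (hstep : τ * σ * (opNorm A) ^ 2 < 1) (p : Evec n × Evec m) :
    0 ≤ wPhi τ σ A p p := by
  rcases eq_or_ne p 0 with rfl | hp
  · simp [wPhi]
  · exact (wPhi_self_pos hτ hσ hstep p hp).le

def unemb (w : EuclideanSpace ℝ (Fin n ⊕ Fin m)) : Evec n × Evec m :=
  ((WithLp.equiv 2 ((_ : Fin n) → ℝ)).symm fun i => w (Sum.inl i),
    ((WithLp.equiv 2 ((_ : Fin m) → ℝ)).symm fun i => w (Sum.inr i)))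

lemma emb_unemb (w : EuclideanSpace ℝ (Fin n ⊕ Fin m)) : emb (unemb w) = w := by
  ext i
  cases i <;> rfl

lemma emb_zero : emb (0 : Evec n × Evec m) = 0 := by
  ext i
  cases i <;> rfl

lemma phi_isUnit_det {τ σ : ℝ} (hτ : 0 < τ) (hσ : 0 < σ) {A : Matrix (Fin m) (Fin n) ℝ}
    (hstep : τ * σ * (opNorm A) ^ 2 < 1) : IsUnit (PhiMat τ σ A).det := by
  rw [← Matrix.isUnit_iff_isUnit_det, ← Matrix.mulVec_injective_iff_isUnit]
  have h0 : ∀ x, (PhiMat τ σ A) *ᵥ x = 0 → x = 0 := by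
    intro x hx
    set q : EuclideanSpace ℝ (Fin n ⊕ Fin m) :=
      (WithLp.equiv 2 ((_ : Fin n ⊕ Fin m) → ℝ)).symm x with hq
    set p := unemb q with hpd
    have hembp : emb p = q := emb_unemb q
    have hq0 : Matrix.toEuclideanLin (PhiMat τ σ A) q = 0 := by
      rw [Matrix.toEuclideanLin_apply]
      have : q.ofLp = x := rfl
      rw [this, hx]
      rfl
    have hwp : wPhi τ σ A p p = 0 := by
      rw [wPhi_eq, ← phi_emb, hembp, hq0, inner_zero_left]
    have hp0 : p = 0 := by
      by_contra hne
      exact absurd hwp (ne_of_gt (wPhi_self_pos hτ hσ hstep p hne))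
    have : q = 0 := by rw [← hembp, hp0, emb_zero]
    have hx0 : x = (WithLp.equiv 2 ((_ : Fin n ⊕ Fin m) → ℝ)) q := rfl
    rw [hx0, this]
    rfl
  intro a b hab
  have : (PhiMat τ σ A) *ᵥ (a - b) = 0 := by
    rw [Matrix.mulVec_sub, hab, sub_self]
  exact sub_eq_zero.1 (h0 _ this)

lemma toEuclideanLin_one {ι : Type*} [Fintype ι] [DecidableEq ι]
    (w : EuclideanSpace ℝ ι) : Matrix.toEuclideanLin (1 : Matrix ι ι ℝ) w = w := by
  rw [Matrix.toEuclideanLin_apply, Matrix.one_mulVec]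

lemma lambdaMin_phiInv_nonneg {τ σ : ℝ} (hτ : 0 < τ) (hσ : 0 < σ)
    {A : Matrix (Fin m) (Fin n) ℝ} (hstep : τ * σ * (opNorm A) ^ 2 < 1) :
    0 ≤ lambdaMin ((PhiMat τ σ A)⁻¹) := by
  apply lambdaMin_nonneg
  intro w
  have hdet := phi_isUnit_det hτ hσ hstep
  have hmul : Matrix.toEuclideanLin (PhiMat τ σ A)
      (Matrix.toEuclideanLin ((PhiMat τ σ A)⁻¹) w) = w := by
    rw [← toEuclideanLin_mul', Matrix.mul_nonsing_inv _ hdet, toEuclideanLin_one]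
  set u := Matrix.toEuclideanLin ((PhiMat τ σ A)⁻¹) w with hu
  have : qform ((PhiMat τ σ A)⁻¹) w = wPhi τ σ A (unemb u) (unemb u) := by
    rw [qform, ← hu, ← hmul, wPhi_eq, ← phi_emb, emb_unemb, real_inner_comm]
  rw [this]
  exact wPhi_self_nonneg hτ hσ hstep _

lemma lambdaMin_AtA_nonneg (A : Matrix (Fin m) (Fin n) ℝ) : 0 ≤ lambdaMin (Aᵀ * A) := by
  apply lambdaMin_nonneg
  intro v
  rw [qform_AtA]
  positivity

end Aux

set_option maxHeartbeats 1000000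

/-- Partial contractivity of the backward step of the semi-implicit primal-dual method:
for the resolvent `J = (Id + Φ_{τ,σ}⁻¹ F_b)⁻¹` of `F_b(x,y) = (∂f(x)+Aᵀy, -Ax)`, one has
`‖J(ω)-J(ω')‖²_{Φ+Ψ_b} ≤ ‖ω-ω'‖²_Φ` with `Ψ_b = diag(γ_x Iₙ, 0)`,
`γ_x = λ_min(Φ⁻¹)λ_min(AᵀA) + 2μ_f`. -/
theorem backward_step_partial_contraction
    (n m : ℕ) (τ σ μf : ℝ) (hτ : 0 < τ) (hσ : 0 < σ) (hμf : 0 ≤ μf)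
    (A : Matrix (Fin m) (Fin n) ℝ)
    (hstep : τ * σ * (opNorm A) ^ 2 < 1)
    (f : Evec n → EReal)
    (hproper : (∀ x, f x ≠ ⊥) ∧ ∃ x, f x ≠ ⊤)
    (hconv : ∀ x y (t : ℝ), 0 ≤ t → t ≤ 1 →
      f (t • x + (1 - t) • y) ≤ (t : EReal) * f x + ((1 - t : ℝ) : EReal) * f y)
    (hclosed : LowerSemicontinuous f)
    (hfsmono : ∀ x x' v v', v ∈ subdiff f x → v' ∈ subdiff f x' →
      μf * ‖x - x'‖ ^ 2 ≤ (inner ℝ (v - v') (x - x') : ℝ))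
    (J : Evec n × Evec m → Evec n × Evec m)
    (hJ : ∀ ω : Evec n × Evec m,
      (τ⁻¹ • (ω.1 - (J ω).1) - Matrix.toEuclideanLin Aᵀ (ω.2 - (J ω).2) -
          Matrix.toEuclideanLin Aᵀ (J ω).2 ∈ subdiff f (J ω).1) ∧
      (σ⁻¹ • (ω.2 - (J ω).2) - Matrix.toEuclideanLin A (ω.1 - (J ω).1) =
        -(Matrix.toEuclideanLin A (J ω).1))) :
    ∀ ω ω' : Evec n × Evec m,
      wPhi τ σ A (J ω - J ω') (J ω - J ω') +
          (lambdaMin ((PhiMat τ σ A)⁻¹) * lambdaMin (Aᵀ * A) + 2 * μf) *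
            ‖(J ω - J ω').1‖ ^ 2 ≤
        wPhi τ σ A (ω - ω') (ω - ω') := by
  intro ω ω'
  obtain ⟨hv1, he1⟩ := hJ ω
  obtain ⟨hv2, he2⟩ := hJ ω'
  set δ : Evec n × Evec m := J ω - J ω' with hδ
  set r : Evec n × Evec m := (ω - J ω) - (ω' - J ω') with hr
  have hδ1 : δ.1 = (J ω).1 - (J ω').1 := rfl
  have hδ2 : δ.2 = (J ω).2 - (J ω').2 := rfl
  have hr1 : r.1 = (ω.1 - (J ω).1) - (ω'.1 - (J ω').1) := rfl
  have hr2 : r.2 = (ω.2 - (J ω).2) - (ω'.2 - (J ω').2) := rfl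
  have hsum : ω - ω' = δ + r := by rw [hδ, hr]; abel
  set v : Evec n := τ⁻¹ • (ω.1 - (J ω).1) - Matrix.toEuclideanLin Aᵀ (ω.2 - (J ω).2) -
      Matrix.toEuclideanLin Aᵀ (J ω).2 with hvdef
  set v' : Evec n := τ⁻¹ • (ω'.1 - (J ω').1) - Matrix.toEuclideanLin Aᵀ (ω'.2 - (J ω').2) -
      Matrix.toEuclideanLin Aᵀ (J ω').2 with hv'def
  have hP1 : τ⁻¹ • r.1 - Matrix.toEuclideanLin Aᵀ r.2
      = (v - v') + Matrix.toEuclideanLin Aᵀ δ.2 := by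
    rw [hvdef, hv'def, hr1, hr2, hδ2]
    simp only [smul_sub, map_sub]
    abel
  have hP2 : σ⁻¹ • r.2 - Matrix.toEuclideanLin A r.1 = -(Matrix.toEuclideanLin A δ.1) := by
    have hx : σ⁻¹ • r.2 - Matrix.toEuclideanLin A r.1
        = (σ⁻¹ • (ω.2 - (J ω).2) - Matrix.toEuclideanLin A (ω.1 - (J ω).1))
          - (σ⁻¹ • (ω'.2 - (J ω').2) - Matrix.toEuclideanLin A (ω'.1 - (J ω').1)) := by
      rw [hr1, hr2]; simp only [smul_sub, map_sub]; abel
    rw [hx, he1, he2, hδ1, map_sub]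
    abel
  have hPr : Aux.Phap τ σ A r = ((v - v') + Matrix.toEuclideanLin Aᵀ δ.2,
      -(Matrix.toEuclideanLin A δ.1)) := by
    rw [Aux.Phap, hP1, hP2]
  have hwPhap : ∀ u w : Evec n × Evec m, wPhi τ σ A u w
      = inner ℝ (Aux.Phap τ σ A u).1 w.1 + (inner ℝ (Aux.Phap τ σ A u).2 w.2 : ℝ) := fun u w => rfl
  have hmono := hfsmono (J ω).1 (J ω').1 v v' hv1 hv2
  have hrδ : wPhi τ σ A r δ = (inner ℝ (v - v') δ.1 : ℝ) := by
    rw [hwPhap, hPr]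
    simp only [inner_add_left, inner_neg_left]
    rw [Aux.adj, real_inner_comm δ.2]
    ring
  have hmono' : μf * ‖δ.1‖ ^ 2 ≤ wPhi τ σ A r δ := by
    rw [hrδ, hδ1]; exact hmono
  have hdet := Aux.phi_isUnit_det hτ hσ hstep
  have hq : qform ((PhiMat τ σ A)⁻¹) (Aux.emb (Aux.Phap τ σ A r)) = wPhi τ σ A r r := by
    simp only [qform]
    rw [← Aux.phi_emb, ← Aux.toEuclideanLin_mul', Matrix.nonsing_inv_mul _ hdet,
      Aux.toEuclideanLin_one, Aux.phi_emb, Aux.inner_emb, hwPhap,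
      real_inner_comm r.1, real_inner_comm r.2]
  have h2 := Aux.lambdaMin_mul_le ((PhiMat τ σ A)⁻¹) (Aux.emb (Aux.Phap τ σ A r))
  rw [hq] at h2
  have h3 : ‖Aux.emb (Aux.Phap τ σ A r)‖ ^ 2
      = ‖(v - v') + Matrix.toEuclideanLin Aᵀ δ.2‖ ^ 2 +
        ‖Matrix.toEuclideanLin A δ.1‖ ^ 2 := by
    rw [Aux.norm_emb_sq, hPr]
    simp [norm_neg]
  have h4 : lambdaMin (Aᵀ * A) * ‖δ.1‖ ^ 2 ≤ ‖Matrix.toEuclideanLin A δ.1‖ ^ 2 := by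
    rw [← Aux.qform_AtA]; exact Aux.lambdaMin_mul_le _ _
  have h5 : 0 ≤ lambdaMin ((PhiMat τ σ A)⁻¹) := Aux.lambdaMin_phiInv_nonneg hτ hσ hstep
  have hrr : lambdaMin ((PhiMat τ σ A)⁻¹) * lambdaMin (Aᵀ * A) * ‖δ.1‖ ^ 2
      ≤ wPhi τ σ A r r := by
    have hA : lambdaMin ((PhiMat τ σ A)⁻¹) * (lambdaMin (Aᵀ * A) * ‖δ.1‖ ^ 2)
        ≤ lambdaMin ((PhiMat τ σ A)⁻¹) * ‖Matrix.toEuclideanLin A δ.1‖ ^ 2 :=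
      mul_le_mul_of_nonneg_left h4 h5
    have hB : lambdaMin ((PhiMat τ σ A)⁻¹) * ‖Matrix.toEuclideanLin A δ.1‖ ^ 2
        ≤ lambdaMin ((PhiMat τ σ A)⁻¹) * ‖Aux.emb (Aux.Phap τ σ A r)‖ ^ 2 := by
      apply mul_le_mul_of_nonneg_left _ h5
      rw [h3]
      exact le_add_of_nonneg_left (sq_nonneg _)
    calc lambdaMin ((PhiMat τ σ A)⁻¹) * lambdaMin (Aᵀ * A) * ‖δ.1‖ ^ 2
        = lambdaMin ((PhiMat τ σ A)⁻¹) * (lambdaMin (Aᵀ * A) * ‖δ.1‖ ^ 2) := by ring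
      _ ≤ _ := hA.trans (hB.trans h2)
  have hexp : wPhi τ σ A (ω - ω') (ω - ω')
      = wPhi τ σ A δ δ + 2 * wPhi τ σ A r δ + wPhi τ σ A r r := by
    rw [hsum, Aux.wPhi_expand]
  rw [hexp]
  linarith [hmono', hrr]
end
end

section
/- Let τ, σ > 0, μ_f, μ_g > 0, A ∈ ℝ^{m×n} with τσ‖A‖² < 1, and set ρ̃ = min{μ_f τ, μ_g σ, κ} where κ = (μ_f τ + μ_g σ - √((μ_f τ - μ_g σ)² + 4‖A‖² μ_f μ_g τ² σ²)) / (2(1 - στ‖A‖²)). Then κ > 0 and the matrix diag(μ_f Iₙ, μ_g I_m) - ρ̃ Φ_{τ,σ} is positive semidefinite, where Φ_{τ,σ} = [[(1/τ)Iₙ,-Aᵀ],[-A,(1/σ)I_m]]. -/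
noncomputable section
open Matrix

private lemma cp_dot_bound {n m : ℕ} (A : Matrix (Fin m) (Fin n) ℝ)
    (x : Fin n → ℝ) (y : Fin m → ℝ) :
    |y ⬝ᵥ (A *ᵥ x)| ≤ opNorm A * Real.sqrt (x ⬝ᵥ x) * Real.sqrt (y ⬝ᵥ y) := by
  set xE : EuclideanSpace ℝ (Fin n) := (WithLp.equiv 2 _).symm x with hxE
  set yE : EuclideanSpace ℝ (Fin m) := (WithLp.equiv 2 _).symm y with hyE
  have hx : Real.sqrt (x ⬝ᵥ x) = ‖xE‖ := by
    rw [EuclideanSpace.norm_eq]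
    congr 1
    simp [hxE, hyE, dotProduct, sq, WithLp.equiv_symm_apply]
  have hy : Real.sqrt (y ⬝ᵥ y) = ‖yE‖ := by
    rw [EuclideanSpace.norm_eq]
    congr 1
    simp [hxE, hyE, dotProduct, sq, WithLp.equiv_symm_apply]
  have hw : y ⬝ᵥ (A *ᵥ x) = inner ℝ yE (Matrix.toEuclideanLin A xE) := by
    rw [Matrix.toEuclideanLin_apply]
    rw [EuclideanSpace.inner_eq_star_dotProduct]
    simp [hxE, hyE, dotProduct_comm]
  have h1 : |inner ℝ yE (Matrix.toEuclideanLin A xE)| ≤ ‖yE‖ * ‖Matrix.toEuclideanLin A xE‖ :=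
    abs_real_inner_le_norm _ _
  have h2 : ‖Matrix.toEuclideanLin A xE‖ ≤ opNorm A * ‖xE‖ := by
    have := (Matrix.toEuclideanLin A).toContinuousLinearMap.le_opNorm xE
    simpa [opNorm] using this
  rw [hw, hx, hy]
  calc |inner ℝ yE (Matrix.toEuclideanLin A xE)| ≤ ‖yE‖ * (opNorm A * ‖xE‖) :=
        h1.trans (by gcongr)
    _ = opNorm A * ‖xE‖ * ‖yE‖ := by ring

private lemma cp_amgm (p q r sX sY : ℝ) (hp : 0 ≤ p) (hq : 0 ≤ q) (hr : 0 ≤ r)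
    (hsX : 0 ≤ sX) (hsY : 0 ≤ sY) (h : r ^ 2 ≤ p * q) :
    2 * r * sX * sY ≤ p * sX ^ 2 + q * sY ^ 2 := by
  rcases eq_or_lt_of_le hp with hp0 | hp0
  · have hr0 : r = 0 := by nlinarith
    rw [hr0, ← hp0]
    simp
    positivity
  · nlinarith [sq_nonneg (p * sX - r * sY),
      mul_nonneg (sub_nonneg.mpr h) (sq_nonneg sY),
      mul_nonneg (mul_nonneg hsX hsY) hr]

set_option maxHeartbeats 1000000 in
/-- The key matrix inequality for the Chambolle–Pock contraction rate under C1: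
with `ρ̃ = min{μ_f τ, μ_g σ, κ}`, one has `κ > 0` and
`diag(μ_f Iₙ, μ_g I_m) - ρ̃ Φ_{τ,σ} ⪰ 0`. -/
theorem chambolle_pock_rate_matrix_inequality
    (n m : ℕ) (τ σ μf μg : ℝ) (hτ : 0 < τ) (hσ : 0 < σ)
    (hμf : 0 < μf) (hμg : 0 < μg)
    (A : Matrix (Fin m) (Fin n) ℝ)
    (hstep : τ * σ * (opNorm A) ^ 2 < 1) :
    0 < (μf * τ + μg * σ -
        Real.sqrt ((μf * τ - μg * σ) ^ 2 + 4 * (opNorm A) ^ 2 * μf * μg * τ ^ 2 * σ ^ 2)) /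
        (2 * (1 - σ * τ * (opNorm A) ^ 2)) ∧
      (Matrix.fromBlocks (μf • (1 : Matrix (Fin n) (Fin n) ℝ)) 0 0
            (μg • (1 : Matrix (Fin m) (Fin m) ℝ)) -
          min (min (μf * τ) (μg * σ))
            ((μf * τ + μg * σ -
              Real.sqrt ((μf * τ - μg * σ) ^ 2 +
                4 * (opNorm A) ^ 2 * μf * μg * τ ^ 2 * σ ^ 2)) /
              (2 * (1 - σ * τ * (opNorm A) ^ 2))) •
          Matrix.fromBlocks (τ⁻¹ • (1 : Matrix (Fin n) (Fin n) ℝ)) (-Aᵀ) (-A)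
            (σ⁻¹ • (1 : Matrix (Fin m) (Fin m) ℝ))).PosSemidef := by
  set N := opNorm A with hNdef
  have hN0 : 0 ≤ N := norm_nonneg _
  set a := μf * τ with ha
  set b := μg * σ with hb
  set c := σ * τ * N ^ 2 with hc
  set disc := (a - b) ^ 2 + 4 * N ^ 2 * μf * μg * τ ^ 2 * σ ^ 2 with hdisc
  set s := Real.sqrt disc with hs
  have hc1 : c < 1 := by rw [hc]; nlinarith
  have hc0 : 0 ≤ c := by rw [hc]; positivity
  have hdisc0 : 0 ≤ disc := by rw [hdisc]; positivity
  have hs2 : s ^ 2 = disc := Real.sq_sqrt hdisc0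
  have hs0 : 0 ≤ s := Real.sqrt_nonneg _
  have ha0 : 0 < a := by rw [ha]; positivity
  have hb0 : 0 < b := by rw [hb]; positivity
  have habc : disc = (a + b) ^ 2 - 4 * a * b * (1 - c) := by
    rw [hdisc, ha, hb, hc]; ring
  clear_value N a b c disc s
  have hslt : s < a + b := by
    have h4 : disc < (a + b) ^ 2 := by
      have h5 := mul_pos (mul_pos ha0 hb0) (by linarith : (0:ℝ) < 1 - c)
      rw [habc]; nlinarith
    rw [hs]
    calc Real.sqrt disc < Real.sqrt ((a + b) ^ 2) := Real.sqrt_lt_sqrt hdisc0 h4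
      _ = a + b := Real.sqrt_sq (by linarith)
  set κ := (a + b - s) / (2 * (1 - c)) with hκ
  have hκ0 : 0 < κ := by rw [hκ]; exact div_pos (by linarith) (by linarith)
  refine ⟨hκ0, ?_⟩
  set ρ := min (min a b) κ with hρ
  clear_value κ ρ
  have hρ0 : 0 < ρ := by rw [hρ]; exact lt_min (lt_min ha0 hb0) hκ0
  have hρa : ρ ≤ a := by rw [hρ]; exact (min_le_left _ _).trans (min_le_left a b)
  have hρb : ρ ≤ b := by rw [hρ]; exact (min_le_left _ _).trans (min_le_right a b)
  have hρκ : ρ ≤ κ := by rw [hρ]; exact min_le_right _ _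
  have hq : 0 ≤ (1 - c) * ρ ^ 2 - (a + b) * ρ + a * b := by
    rw [hκ] at hρκ
    have h1 : ρ * (2 * (1 - c)) ≤ a + b - s := (le_div_iff₀ (by linarith)).mp hρκ
    have ht : s ≤ a + b - 2 * (1 - c) * ρ := by linarith
    nlinarith [mul_nonneg (sub_nonneg.mpr ht) (by linarith : (0:ℝ) ≤ a + b - 2 * (1 - c) * ρ + s)]
  have hp : 0 ≤ μf - ρ * τ⁻¹ := by
    have : ρ / τ ≤ μf := (div_le_iff₀ hτ).mpr (by rw [ha] at hρa; linarith)
    rw [div_eq_mul_inv] at this; linarith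
  have hq' : 0 ≤ μg - ρ * σ⁻¹ := by
    have : ρ / σ ≤ μg := (div_le_iff₀ hσ).mpr (by rw [hb] at hρb; linarith)
    rw [div_eq_mul_inv] at this; linarith
  have hkey : (ρ * N) ^ 2 ≤ (μf - ρ * τ⁻¹) * (μg - ρ * σ⁻¹) := by
    have expand : (μf - ρ * τ⁻¹) * (μg - ρ * σ⁻¹) - (ρ * N) ^ 2
        = ((1 - c) * ρ ^ 2 - (a + b) * ρ + a * b) * (τ⁻¹ * σ⁻¹) := by
      rw [ha, hb, hc]
      field_simp
      ring
    linarith [expand, mul_nonneg hq (by positivity : (0:ℝ) ≤ τ⁻¹ * σ⁻¹)]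
  have hM : (Matrix.fromBlocks (μf • (1 : Matrix (Fin n) (Fin n) ℝ)) 0 0
            (μg • (1 : Matrix (Fin m) (Fin m) ℝ)) -
          ρ • Matrix.fromBlocks (τ⁻¹ • (1 : Matrix (Fin n) (Fin n) ℝ)) (-Aᵀ) (-A)
            (σ⁻¹ • (1 : Matrix (Fin m) (Fin m) ℝ)))
      = Matrix.fromBlocks ((μf - ρ * τ⁻¹) • (1 : Matrix (Fin n) (Fin n) ℝ)) (ρ • Aᵀ)
          (ρ • A) ((μg - ρ * σ⁻¹) • (1 : Matrix (Fin m) (Fin m) ℝ)) := by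
    ext (i | i) (j | j) <;>
      simp only [Matrix.sub_apply, Matrix.smul_apply, Matrix.fromBlocks_apply₁₁,
        Matrix.fromBlocks_apply₁₂, Matrix.fromBlocks_apply₂₁, Matrix.fromBlocks_apply₂₂,
        Matrix.one_apply, Matrix.zero_apply, Matrix.neg_apply, smul_eq_mul,
        mul_ite, mul_zero, mul_neg] <;>
      (try split_ifs) <;> ring
  rw [hM]
  refine Matrix.PosSemidef.of_dotProduct_mulVec_nonneg ?_ ?_
  · refine Matrix.IsHermitian.fromBlocks ?_ ?_ ?_
    · simp [Matrix.IsHermitian]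
    · ext i j; simp [Matrix.conjTranspose_apply]
    · simp [Matrix.IsHermitian]
  · intro v
    have hv : v = Sum.elim (v ∘ Sum.inl) (v ∘ Sum.inr) := (Sum.elim_comp_inl_inr v).symm
    set x := v ∘ Sum.inl
    set y := v ∘ Sum.inr
    rw [hv]
    have hstar : star (Sum.elim x y) = Sum.elim x y := by
      ext i; simp
    rw [hstar, fromBlocks_mulVec, sumElim_dotProduct_sumElim,
      Sum.elim_comp_inl, Sum.elim_comp_inr]
    have hsym : x ⬝ᵥ (Aᵀ *ᵥ y) = y ⬝ᵥ (A *ᵥ x) := by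
      rw [mulVec_transpose, dotProduct_mulVec y A x, dotProduct_comm]
    have hX0 : (0:ℝ) ≤ x ⬝ᵥ x := Finset.sum_nonneg fun i _ => mul_self_nonneg _
    have hY0 : (0:ℝ) ≤ y ⬝ᵥ y := Finset.sum_nonneg fun i _ => mul_self_nonneg _
    have hbound := cp_dot_bound A x y
    have hamgm := cp_amgm (μf - ρ * τ⁻¹) (μg - ρ * σ⁻¹) (ρ * N)
      (Real.sqrt (x ⬝ᵥ x)) (Real.sqrt (y ⬝ᵥ y))
      hp hq' (by positivity) (Real.sqrt_nonneg _) (Real.sqrt_nonneg _) hkey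
    rw [Real.sq_sqrt hX0, Real.sq_sqrt hY0] at hamgm
    have hwlb : -(N * Real.sqrt (x ⬝ᵥ x) * Real.sqrt (y ⬝ᵥ y)) ≤ y ⬝ᵥ (A *ᵥ x) := by
      have := abs_le.mp hbound
      rw [← hNdef] at this
      linarith [this.1]
    have hexp : x ⬝ᵥ (((μf - ρ * τ⁻¹) • (1 : Matrix (Fin n) (Fin n) ℝ)) *ᵥ x + (ρ • Aᵀ) *ᵥ y)
        + y ⬝ᵥ ((ρ • A) *ᵥ x + ((μg - ρ * σ⁻¹) • (1 : Matrix (Fin m) (Fin m) ℝ)) *ᵥ y)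
        = (μf - ρ * τ⁻¹) * (x ⬝ᵥ x) + (μg - ρ * σ⁻¹) * (y ⬝ᵥ y)
          + 2 * ρ * (y ⬝ᵥ (A *ᵥ x)) := by
      rw [dotProduct_add, dotProduct_add, smul_mulVec, smul_mulVec,
        smul_mulVec, smul_mulVec, one_mulVec, one_mulVec,
        dotProduct_smul, dotProduct_smul, dotProduct_smul, dotProduct_smul, hsym]
      simp [smul_eq_mul]
      ring
    rw [hexp]
    nlinarith [mul_le_mul_of_nonneg_left hwlb (by linarith : (0:ℝ) ≤ 2 * ρ)]
end
end
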